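/- arXiv:2009.05861 — 2 statements merged into one kernel-verified Lean document; each statement's English description precedes it below -/
import Mathlib

section
/- For a strong composition α, κ_α is a sum of exactly two fundamental slide polynomials, κ_α = 𝔉_α + 𝔉_β with β ≠ α, if and only if α has exactly one inversion (i, i+1) and α_{i+1} = α_i + 1; and in that case β = sort(α), the weakly decreasing rearrangement of α. -/
/-- `b` dominates `a`: every partial sum of `b` is at least that of `a`. -/
def Dominates (b a : List ℕ) : Prop :=
  ∀ i : ℕ, (a.take i).sum ≤ (b.take i).sum

/-- `flatten a` removes the zero parts of a weak composition. -/
def Flatten (a : List ℕ) : List ℕ := a.filter (· != 0)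

/-- `β` refines `α`: `β` decomposes into consecutive nonempty blocks whose sums give `α`. -/
def Refines (β α : List ℕ) : Prop :=
  ∃ L : List (List ℕ), (∀ l ∈ L, l ≠ []) ∧ L.flatten = β ∧ L.map List.sum = α

/-- The set of inversions of a composition: pairs `i < j` with `α i < α j`. -/
def invSet (α : List ℕ) : Finset (Fin α.length × Fin α.length) :=
  Finset.univ.filter fun p => p.1 < p.2 ∧ α.get p.1 < α.get p.2

/-- Kohnert tableau of content `a`, encoded as a filling `T : (row, col) → entry`,
with `0` meaning an empty position, rows and columns indexed from `1`. -/
def IsKohnert (a : List ℕ) (T : ℕ × ℕ → ℕ) : Prop :=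
  -- cells live at positive coordinates
  (∀ r c, T (r, c) ≠ 0 → 1 ≤ r ∧ 1 ≤ c) ∧
  -- entries are among 1,…,ℓ
  (∀ r c, T (r, c) ≠ 0 → 1 ≤ T (r, c) ∧ T (r, c) ≤ a.length) ∧
  -- (i) for each i there is exactly one i in each column 1,…,aᵢ and none beyond
  (∀ i, 1 ≤ i → i ≤ a.length → ∀ c, 1 ≤ c →
    (c ≤ a.getD (i - 1) 0 → ∃! r, T (r, c) = i) ∧
    (a.getD (i - 1) 0 < c → ∀ r, T (r, c) ≠ i)) ∧
  -- (ii) each entry in row r is at least r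
  (∀ r c, T (r, c) ≠ 0 → r ≤ T (r, c)) ∧
  -- (iii) the cells filled with a given entry weakly descend from left to right
  (∀ r c r' c', T (r, c) ≠ 0 → T (r, c) = T (r', c') → c < c' → r' ≤ r) ∧
  -- (iv) if i < j share a column with i above j, there is an i in the next column,
  -- strictly above the cell containing j
  (∀ r r' c, T (r, c) ≠ 0 → T (r', c) ≠ 0 → T (r, c) < T (r', c) → r' < r →
    ∃ r'', r' < r'' ∧ T (r'', c + 1) = T (r, c))

/-- Quasi-Yamanouchi Kohnert tableau: additionally (v) every nonempty row `r` contains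
the entry `r`, or has a cell in row `r+1` weakly right of one of its cells. -/
def IsQYKohnert (a : List ℕ) (T : ℕ × ℕ → ℕ) : Prop :=
  IsKohnert a T ∧
  ∀ r, 1 ≤ r → (∃ c, T (r, c) ≠ 0) →
    ((∃ c, T (r, c) = r) ∨ ∃ c c', T (r, c) ≠ 0 ∧ T (r + 1, c') ≠ 0 ∧ c ≤ c')

/-- The weight of a filling: the list recording the number of cells in each row `1,…,ℓ`. -/
def wtList (a : List ℕ) (T : ℕ × ℕ → ℕ) : List ℕ :=
  (List.range a.length).map fun r =>
    ((Finset.Icc 1 a.sum).filter fun c => T (r + 1, c) ≠ 0).card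

open Classical in
/-- Coefficient of the monomial `x^b` in the fundamental slide polynomial `𝔉_a`. -/
noncomputable def fundCoeff (a b : List ℕ) : ℕ :=
  if b.length = a.length ∧ Dominates b a ∧ Refines (Flatten b) (Flatten a) then 1 else 0

/-- Coefficient of the monomial `x^b` in the key polynomial `κ_a`:
the number of Kohnert tableaux of content `a` and weight `b`. -/
noncomputable def keyCoeff (a b : List ℕ) : ℕ :=
  Set.ncard {T : ℕ × ℕ → ℕ | IsKohnert a T ∧ wtList a T = b}

/-- The basic filling of content `a`: `aᵢ` cells filled with `i` in row `i`, columns `1,…,aᵢ`. -/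
def basicFilling (a : List ℕ) : ℕ × ℕ → ℕ := fun p =>
  if 1 ≤ p.1 ∧ p.1 ≤ a.length ∧ 1 ≤ p.2 ∧ p.2 ≤ a.getD (p.1 - 1) 0 then p.1 else 0

/-- `κ_α` is multiplicity free in the fundamental slide basis: quasi-Yamanouchi
Kohnert tableaux of content `α` have pairwise distinct weights. -/
def MultFree (α : List ℕ) : Prop :=
  ∀ T₁ T₂ : ℕ × ℕ → ℕ, IsQYKohnert α T₁ → IsQYKohnert α T₂ →
    wtList α T₁ = wtList α T₂ → T₁ = T₂

set_option linter.unusedSectionVars false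
set_option linter.unusedVariables false
section Proof14

lemma Flatten_strong {a : List ℕ} (ha : ∀ x ∈ a, 0 < x) : Flatten a = a := by
  unfold Flatten
  rw [List.filter_eq_self]
  intro x hx
  simpa using (ha x hx).ne'

lemma refines_refl (a : List ℕ) : Refines a a := by
  refine ⟨a.map (fun x => [x]), ?_, ?_, ?_⟩
  · intro l hl
    simp only [List.mem_map] at hl
    obtain ⟨x, -, rfl⟩ := hl
    simp
  · induction a with
    | nil => simp
    | cons x t ih => simpa using ih
  · induction a with
    | nil => simp
    | cons x t ih => simpa using ih

lemma length_le_sum_of_one_le {l : List ℕ} (h : ∀ x ∈ l, 1 ≤ x) : l.length ≤ l.sum := by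
  induction l with
  | nil => simp
  | cons x t ih =>
    have hx := h x (by simp)
    have := ih (fun y hy => h y (by simp [hy]))
    simp only [List.length_cons, List.sum_cons]
    omega

lemma flatten_eq_map_sum {L : List (List ℕ)} (h : ∀ l ∈ L, ∃ x, l = [x]) :
    L.flatten = L.map List.sum := by
  induction L with
  | nil => simp
  | cons l t ih =>
    obtain ⟨x, rfl⟩ := h l (by simp)
    simp only [List.flatten_cons, List.map_cons, List.sum_cons, List.sum_nil]
    rw [ih (fun l hl => h l (by simp [hl]))]
    simp

lemma all_one_of_sum_eq_length {l : List ℕ} (h1 : ∀ x ∈ l, 1 ≤ x) (h2 : l.sum = l.length) :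
    ∀ x ∈ l, x = 1 := by
  induction l with
  | nil => simp
  | cons x t ih =>
    simp only [List.sum_cons, List.length_cons] at h2
    have hx : 1 ≤ x := h1 x (by simp)
    have ht : ∀ y ∈ t, 1 ≤ y := fun y hy => h1 y (by simp [hy])
    have hts : t.length ≤ t.sum := length_le_sum_of_one_le ht
    have hx1 : x = 1 := by omega
    have hsum : t.sum = t.length := by omega
    intro y hy
    rcases List.mem_cons.mp hy with rfl | hy
    · exact hx1
    · exact ih ht hsum y hy

lemma fundCoeff_strong {a : List ℕ} (ha : ∀ x ∈ a, 0 < x) (b : List ℕ) :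
    fundCoeff a b = if b = a then 1 else 0 := by
  unfold fundCoeff
  rw [Flatten_strong ha]
  by_cases hba : b = a
  · subst hba
    rw [if_pos rfl, if_pos]
    exact ⟨rfl, fun i => le_refl _, by rw [Flatten_strong ha]; exact refines_refl _⟩
  · rw [if_neg hba, if_neg]
    rintro ⟨hlen, -, L, hne, hflat, hsum⟩
    apply hba
    have hLlen : L.length = a.length := by
      have := congrArg List.length hsum
      simpa using this
    have hfl_len : (Flatten b).length = (L.map List.length).sum := by
      rw [← hflat]; exact List.length_flatten
    have hble : (Flatten b).length ≤ b.length := List.length_filter_le _ _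
    have hge : ∀ x ∈ L.map List.length, 1 ≤ x := by
      intro x hx
      simp only [List.mem_map] at hx
      obtain ⟨l, hl, rfl⟩ := hx
      have := hne l hl
      cases l with
      | nil => exact absurd rfl this
      | cons _ _ => simp
    have hLsumlen : L.length ≤ (L.map List.length).sum := by
      have := length_le_sum_of_one_le hge
      simpa using this
    -- lengths all equal
    have heq : (L.map List.length).sum = (L.map List.length).length := by
      simp only [List.length_map]
      omega
    have hall1 : ∀ x ∈ L.map List.length, x = 1 := all_one_of_sum_eq_length hge heq
    have hkey : L.flatten = L.map List.sum := by
      apply flatten_eq_map_sum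
      intro l hl
      exact List.length_eq_one_iff.mp (hall1 l.length (List.mem_map_of_mem hl))
    have hfb : Flatten b = a := by rw [← hflat, hkey, hsum]
    have : (Flatten b).length = b.length := by rw [hfb, hlen]
    have hsub : (Flatten b).Sublist b := List.filter_sublist
    rw [← hsub.eq_of_length this, hfb]


def Ath (α : List ℕ) (j : ℕ) : ℕ := α.getD (j-1) 0

/-- `(j, c)` a valid cell-slot: entry `j` has a cell in column `c`. -/
def VV (α : List ℕ) (j c : ℕ) : Prop := 1 ≤ j ∧ j ≤ α.length ∧ 1 ≤ c ∧ c ≤ Ath α j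

def toFill (α : List ℕ) (f : ℕ → ℕ → ℕ) : ℕ × ℕ → ℕ := fun p =>
  match (List.range α.length).find?
      (fun t => decide (1 ≤ p.2 ∧ p.2 ≤ α.getD t 0 ∧ f (t+1) p.2 = p.1)) with
  | some t => t+1
  | none => 0

section toFillLemmas
variable {α : List ℕ} {f : ℕ → ℕ → ℕ}

/-- entries strictly increase going up, within each column, on valid slots -/
def ColIncr (α : List ℕ) (f : ℕ → ℕ → ℕ) : Prop :=
  ∀ j j' c, VV α j c → VV α j' c → j < j' → f j c < f j' c

lemma toFill_apply_ne {r c j : ℕ} (h : toFill α f (r, c) = j) (hj : j ≠ 0) :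
    VV α j c ∧ f j c = r := by
  unfold toFill at h
  simp only at h
  rcases hfind : (List.range α.length).find?
      (fun t => decide (1 ≤ c ∧ c ≤ α.getD t 0 ∧ f (t+1) c = r)) with _ | t
  · rw [hfind] at h; simp only at h; omega
  · rw [hfind] at h
    simp only at h
    have hmem := List.find?_some hfind
    have hrange := List.mem_range.mp (List.mem_of_find?_eq_some hfind)
    simp only [decide_eq_true_eq] at hmem
    subst h
    exact ⟨⟨by omega, by omega, hmem.1, hmem.2.1⟩, hmem.2.2⟩

lemma toFill_eq (hd : ColIncr α f) {j c : ℕ} (hjc : VV α j c) : toFill α f (f j c, c) = j := by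
  obtain ⟨h1, h2, h3, h4⟩ := hjc
  unfold toFill
  simp only
  rcases hfind : (List.range α.length).find?
      (fun t => decide (1 ≤ c ∧ c ≤ α.getD t 0 ∧ f (t+1) c = f j c)) with _ | t
  · exfalso
    have hnone := List.find?_eq_none.mp hfind (j-1) (List.mem_range.mpr (by omega))
    simp only [decide_eq_true_eq] at hnone
    apply hnone
    refine ⟨h3, ?_, ?_⟩
    · show c ≤ α.getD (j-1) 0
      exact h4
    · rw [(by omega : j - 1 + 1 = j)]
  · have hmem := List.find?_some hfind
    have hrange := List.mem_range.mp (List.mem_of_find?_eq_some hfind)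
    simp only [decide_eq_true_eq] at hmem
    have hVV : VV α (t+1) c := ⟨by omega, by omega, hmem.1, hmem.2.1⟩
    rcases lt_trichotomy (t+1) j with h | h | h
    · exact absurd (hd _ _ _ hVV ⟨h1, h2, h3, h4⟩ h) (by rw [hmem.2.2]; omega)
    · simp [h]
    · exact absurd (hd _ _ _ ⟨h1, h2, h3, h4⟩ hVV h) (by rw [hmem.2.2]; omega)

lemma toFill_ne_zero_iff (hd : ColIncr α f) {r c : ℕ} :
    toFill α f (r, c) ≠ 0 ↔ ∃ j, VV α j c ∧ f j c = r := by
  constructor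
  · intro h
    exact ⟨toFill α f (r, c), toFill_apply_ne rfl h⟩
  · rintro ⟨j, hV, hf⟩
    have h1 := hV.1
    rw [← hf, toFill_eq hd hV]
    omega

lemma IsKohnert_toFill
    (ha : ∀ j c, VV α j c → 1 ≤ f j c ∧ f j c ≤ j)
    (hc : ∀ j c c', VV α j c → VV α j c' → c ≤ c' → f j c' ≤ f j c)
    (hd : ColIncr α f) : IsKohnert α (toFill α f) := by
  have key : ∀ r c j, toFill α f (r, c) = j → j ≠ 0 → VV α j c ∧ f j c = r :=
    fun r c j h hj => toFill_apply_ne h hj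
  refine ⟨?_, ?_, ?_, ?_, ?_, ?_⟩
  · intro r c h
    obtain ⟨⟨h1, h2, h3, h4⟩, hf⟩ := key r c _ rfl h
    have := ha _ _ ⟨h1, h2, h3, h4⟩
    omega
  · intro r c h
    obtain ⟨⟨h1, h2, h3, h4⟩, hf⟩ := key r c _ rfl h
    exact ⟨h1, h2⟩
  · intro i hi hil c hc1
    constructor
    · intro hcA
      have hV : VV α i c := ⟨hi, hil, hc1, hcA⟩
      refine ⟨f i c, toFill_eq hd hV, ?_⟩
      intro r hr
      exact (key r c i hr (by omega)).2.symm
    · intro hcA r h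
      obtain ⟨⟨h1, h2, h3, h4⟩, hf⟩ := key r c i h (by omega)
      unfold Ath at h4
      omega
  · intro r c h
    obtain ⟨hV, hf⟩ := key r c _ rfl h
    have := ha _ _ hV
    omega
  · intro r c r' c' h heq hcc
    obtain ⟨hV, hf⟩ := key r c _ rfl h
    obtain ⟨hV', hf'⟩ := key r' c' _ heq.symm (by omega)
    rw [← hf, ← hf']
    exact hc _ _ _ hV hV' (le_of_lt hcc)
  · intro r r' c h h' hlt hrr
    exfalso
    obtain ⟨hV, hf⟩ := key r c _ rfl h
    obtain ⟨hV', hf'⟩ := key r' c _ rfl h'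
    have := hd _ _ _ hV hV' hlt
    omega

end toFillLemmas

-- depends on p1,p2 content; standalone names assumed present

section Counting

lemma count_Icc {S t : ℕ} {P : ℕ → Prop} [DecidablePred P]
    (h : ∀ c, 1 ≤ c → c ≤ S → (P c ↔ c ≤ t)) (ht : t ≤ S) :
    ((Finset.Icc 1 S).filter (fun c => P c)).card = t := by
  have heq : (Finset.Icc 1 S).filter (fun c => P c) = Finset.Icc 1 t := by
    ext c
    simp only [Finset.mem_filter, Finset.mem_Icc]
    constructor
    · rintro ⟨⟨hc1, hcS⟩, hP⟩
      exact ⟨hc1, (h c hc1 hcS).mp hP⟩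
    · rintro ⟨hc1, hct⟩
      exact ⟨⟨hc1, le_trans hct ht⟩, (h c hc1 (le_trans hct ht)).mpr hct⟩
  rw [heq, Nat.card_Icc]
  omega

lemma count_Icc_two {S t u v : ℕ} {P : ℕ → Prop} [DecidablePred P]
    (h : ∀ c, 1 ≤ c → c ≤ S → (P c ↔ (c ≤ t ∨ (u ≤ c ∧ c ≤ v))))
    (h1 : t < u) (h2 : u ≤ v) (h3 : v ≤ S) :
    ((Finset.Icc 1 S).filter (fun c => P c)).card = t + (v + 1 - u) := by
  have heq : (Finset.Icc 1 S).filter (fun c => P c) = Finset.Icc 1 t ∪ Finset.Icc u v := by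
    ext c
    simp only [Finset.mem_filter, Finset.mem_Icc, Finset.mem_union]
    constructor
    · rintro ⟨⟨hc1, hcS⟩, hP⟩
      rcases (h c hc1 hcS).mp hP with h' | h'
      · exact Or.inl ⟨hc1, h'⟩
      · exact Or.inr h'
    · rintro (⟨hc1, hct⟩ | ⟨hcu, hcv⟩)
      · exact ⟨⟨hc1, by omega⟩, (h c hc1 (by omega)).mpr (Or.inl hct)⟩
      · exact ⟨⟨by omega, by omega⟩, (h c (by omega) (by omega)).mpr (Or.inr ⟨hcu, hcv⟩)⟩
  rw [heq, Finset.card_union_of_disjoint, Nat.card_Icc, Nat.card_Icc]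
  · omega
  · rw [Finset.disjoint_left]
    intro c hc hc'
    simp only [Finset.mem_Icc] at hc hc'
    omega

end Counting

section WtLemmas

lemma wtList_length (a : List ℕ) (T : ℕ × ℕ → ℕ) : (wtList a T).length = a.length := by
  simp [wtList]

lemma wtList_getElem (a : List ℕ) (T : ℕ × ℕ → ℕ) {t : ℕ} (ht : t < a.length) :
    (wtList a T)[t]'(by rw [wtList_length]; exact ht) =
      ((Finset.Icc 1 a.sum).filter fun c => T (t + 1, c) ≠ 0).card := by
  simp [wtList]

lemma Ath_le_sum (α : List ℕ) {j : ℕ} (h1 : 1 ≤ j) (h2 : j ≤ α.length) :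
    Ath α j ≤ α.sum := by
  unfold Ath
  rw [List.getD_eq_getElem α 0 (by omega)]
  exact List.single_le_sum (fun x _ => Nat.zero_le x) _ (List.getElem_mem _)

lemma Ath_pos {α : List ℕ} (hpos : ∀ x ∈ α, 0 < x) {j : ℕ} (h1 : 1 ≤ j) (h2 : j ≤ α.length) :
    1 ≤ Ath α j := by
  unfold Ath
  rw [List.getD_eq_getElem α 0 (by omega)]
  exact hpos _ (List.getElem_mem _)

lemma Ath_getElem (α : List ℕ) {t : ℕ} (ht : t < α.length) : α[t] = Ath α (t+1) := by
  unfold Ath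
  rw [List.getD_eq_getElem α 0 (by omega)]
  simp only [Nat.add_sub_cancel]

end WtLemmas

section Fillers

def fB : ℕ → ℕ → ℕ := fun j _ => j

def fI (i e x : ℕ) : ℕ → ℕ → ℕ := fun j c => if j = i ∧ e ≤ c then x else j

lemma fB_hd (α : List ℕ) : ColIncr α fB := fun j j' c _ _ h => h

lemma basicFilling_eq_toFill (α : List ℕ) : basicFilling α = toFill α fB := by
  funext p
  rcases p with ⟨r, c⟩
  unfold basicFilling
  simp only
  by_cases h : 1 ≤ r ∧ r ≤ α.length ∧ 1 ≤ c ∧ c ≤ α.getD (r - 1) 0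
  · rw [if_pos h]
    have : toFill α fB (fB r c, c) = r := toFill_eq (fB_hd α) h
    simpa [fB] using this.symm
  · rw [if_neg h]
    by_contra hne
    obtain ⟨hV, hf⟩ := toFill_apply_ne (α := α) (f := fB) rfl (Ne.symm hne)
    have hf' : toFill α fB (r, c) = r := hf
    rw [hf'] at hV
    exact h hV

lemma IsKohnert_basic (α : List ℕ) : IsKohnert α (basicFilling α) := by
  rw [basicFilling_eq_toFill]
  exact IsKohnert_toFill (fun j c hV => ⟨hV.1, le_rfl⟩) (fun j c c' _ _ _ => le_rfl) (fB_hd α)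

lemma wt_basic (α : List ℕ) : wtList α (basicFilling α) = α := by
  apply List.ext_getElem
  · rw [wtList_length]
  · intro t ht1 ht2
    rw [wtList_getElem α _ ht2, basicFilling_eq_toFill]
    rw [Ath_getElem α ht2]
    apply count_Icc
    · intro c hc1 hcS
      rw [Ne, ← ne_eq, toFill_ne_zero_iff (fB_hd α)]
      constructor
      · rintro ⟨j, hV, hf⟩
        unfold fB at hf
        subst hf
        exact hV.2.2.2
      · intro hc
        exact ⟨t + 1, ⟨by omega, by omega, hc1, hc⟩, rfl⟩
    · exact Ath_le_sum α (by omega) (by omega)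

section fIlemmas

variable {α : List ℕ} {i e x : ℕ}
variable (hx1 : 1 ≤ x) (hxi : x < i) (hil : i ≤ α.length)
variable (hex : Ath α x < e) (hei : e ≤ Ath α i)
variable (h4 : ∀ j, 1 ≤ j → j < i → e ≤ Ath α j → j < x)

include hx1 hxi hil hex hei h4

lemma fI_hd : ColIncr α (fI i e x) := by
  intro j j' c hV hV' hjj
  unfold fI
  by_cases h1 : j = i ∧ e ≤ c
  · rw [if_pos h1]
    have h2 : ¬(j' = i ∧ e ≤ c) := by
      rintro ⟨rfl, -⟩; omega
    rw [if_neg h2]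
    omega
  · rw [if_neg h1]
    by_cases h2 : j' = i ∧ e ≤ c
    · rw [if_pos h2]
      have hje : e ≤ Ath α j := le_trans h2.2 hV.2.2.2
      exact h4 j hV.1 (by omega) hje
    · rw [if_neg h2]
      omega

lemma fI_kohnert : IsKohnert α (toFill α (fI i e x)) := by
  apply IsKohnert_toFill
  · intro j c hV
    unfold fI
    by_cases h : j = i ∧ e ≤ c
    · rw [if_pos h]; omega
    · rw [if_neg h]; exact ⟨hV.1, le_rfl⟩
  · intro j c c' hV hV' hcc
    unfold fI
    by_cases h1 : j = i ∧ e ≤ c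
    · rw [if_pos h1, if_pos ⟨h1.1, le_trans h1.2 hcc⟩]
    · rw [if_neg h1]
      by_cases h2 : j = i ∧ e ≤ c'
      · rw [if_pos h2]; omega
      · rw [if_neg h2]
  · exact fI_hd hx1 hxi hil hex hei h4

lemma fI_wt :
    wtList α (toFill α (fI i e x)) =
      (α.set (x-1) (Ath α x + (Ath α i + 1 - e))).set (i-1) (e-1) := by
  have hd := fI_hd hx1 hxi hil hex hei h4
  apply List.ext_getElem
  · rw [wtList_length]; simp
  · intro t ht1 ht2
    have htl : t < α.length := by simpa using ht2
    rw [wtList_getElem α _ htl]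
    by_cases hti : t = i - 1
    · subst hti
      rw [List.getElem_set_self]
      rw [count_Icc (t := e - 1)]
      · intro c hc1 hcS
        rw [Ne, ← ne_eq, toFill_ne_zero_iff hd]
        constructor
        · rintro ⟨j, hV, hf⟩
          unfold fI at hf
          by_cases h : j = i ∧ e ≤ c
          · rw [if_pos h] at hf; omega
          · rw [if_neg h] at hf
            have hji : j = i := by omega
            have hne2 : ¬ e ≤ c := fun hh => h ⟨hji, hh⟩
            omega
        · intro hce
          refine ⟨i, ⟨by omega, hil, hc1, by omega⟩, ?_⟩
          unfold fI
          rw [if_neg (by omega), (by omega : i - 1 + 1 = i)]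
      · have := Ath_le_sum α (le_trans hx1 (le_of_lt hxi) : 1 ≤ i) hil
        omega
    · by_cases htx : t = x - 1
      · subst htx
        rw [List.getElem_set_ne (by omega), List.getElem_set_self]
        rw [count_Icc_two (t := Ath α x) (u := e) (v := Ath α i)]
        · intro c hc1 hcS
          rw [Ne, ← ne_eq, toFill_ne_zero_iff hd]
          constructor
          · rintro ⟨j, hV, hf⟩
            unfold fI at hf
            by_cases h : j = i ∧ e ≤ c
            · rw [if_pos h] at hf
              right
              refine ⟨h.2, ?_⟩
              have := hV.2.2.2
              rw [h.1] at this
              omega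
            · rw [if_neg h] at hf
              left
              have hjx : j = x := by omega
              subst hjx
              have := hV.2.2.2
              omega
          · rintro (hc | ⟨hc1', hc2⟩)
            · refine ⟨x, ⟨hx1, by omega, hc1, by omega⟩, ?_⟩
              unfold fI
              rw [if_neg (by omega), (by omega : x - 1 + 1 = x)]
            · refine ⟨i, ⟨by omega, hil, hc1, by omega⟩, ?_⟩
              unfold fI
              rw [if_pos ⟨by omega, hc1'⟩, (by omega : x - 1 + 1 = x)]
        · exact hex
        · exact hei
        · exact Ath_le_sum α (by omega) hil
      · rw [List.getElem_set_ne (by omega), List.getElem_set_ne (by omega)]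
        rw [Ath_getElem α htl]
        rw [count_Icc (t := Ath α (t+1))]
        · intro c hc1 hcS
          rw [Ne, ← ne_eq, toFill_ne_zero_iff hd]
          constructor
          · rintro ⟨j, hV, hf⟩
            unfold fI at hf
            by_cases h : j = i ∧ e ≤ c
            · rw [if_pos h] at hf; omega
            · rw [if_neg h] at hf
              subst hf
              exact hV.2.2.2
          · intro hc
            refine ⟨t+1, ⟨by omega, by omega, hc1, hc⟩, ?_⟩
            unfold fI
            rw [if_neg (by omega)]
        · exact Ath_le_sum α (by omega) (by omega)

end fIlemmas

end Fillers


section Structure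

variable {α : List ℕ} {T : ℕ × ℕ → ℕ}

lemma exists_unique_row (hT : IsKohnert α T) {j c : ℕ} (hj1 : 1 ≤ j) (hj2 : j ≤ α.length)
    (hc1 : 1 ≤ c) (hc2 : c ≤ Ath α j) : ∃! r, T (r, c) = j :=
  (hT.2.2.1 j hj1 hj2 c hc1).1 hc2

lemma kohnert_bounds (hT : IsKohnert α T) {r c : ℕ} (h : T (r, c) ≠ 0) :
    1 ≤ T (r, c) ∧ T (r, c) ≤ α.length ∧ 1 ≤ c ∧ c ≤ Ath α (T (r, c)) ∧ 1 ≤ r ∧ r ≤ T (r, c) := by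
  obtain ⟨B1, B2, B3, B4, B5, B6⟩ := hT
  have h1 := B1 r c h
  have h2 := B2 r c h
  have h4 := B4 r c h
  refine ⟨h2.1, h2.2, h1.2, ?_, h1.1, h4⟩
  by_contra hcon
  push_neg at hcon
  exact (B3 (T (r, c)) h2.1 h2.2 c h1.2).2 hcon r rfl

lemma forced (hT : IsKohnert α T) {c : ℕ} (hc : 1 ≤ c) :
    ∀ j, 1 ≤ j → j ≤ α.length → (∀ j', 1 ≤ j' → j' ≤ j → c ≤ Ath α j') → T (j, c) = j := by
  intro j
  induction j using Nat.strong_induction_on with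
  | _ j ih =>
    intro h1 h2 h3
    obtain ⟨r, hr, huniq⟩ := exists_unique_row hT h1 h2 hc (h3 j h1 le_rfl)
    have hb := kohnert_bounds hT (r := r) (c := c) (by rw [hr]; omega)
    rw [hr] at hb
    rcases Nat.lt_or_ge r j with hlt | hge
    · have hforced : T (r, c) = r :=
        ih r hlt (by omega) (by omega) (fun j' a b => h3 j' a (by omega))
      rw [hforced] at hr
      omega
    · have hrj : r = j := by omega
      rw [hrj] at hr
      exact hr

lemma wt_pos (hpos : ∀ x ∈ α, 0 < x) (hT : IsKohnert α T) :
    ∀ y ∈ wtList α T, 0 < y := by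
  intro y hy
  unfold wtList at hy
  simp only [List.mem_map, List.mem_range] at hy
  obtain ⟨t, ht, rfl⟩ := hy
  apply Finset.card_pos.mpr
  refine ⟨1, ?_⟩
  simp only [Finset.mem_filter, Finset.mem_Icc]
  have hsum : 1 ≤ α.sum :=
    le_trans (Ath_pos hpos (by omega) (by omega : t + 1 ≤ α.length)) (Ath_le_sum α (by omega) (by omega))
  refine ⟨⟨le_refl 1, hsum⟩, ?_⟩
  have := forced hT (le_refl 1) (t+1) (by omega) (by omega)
    (fun j' hj1 hj2 => Ath_pos hpos hj1 (by omega))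
  rw [this]
  omega

lemma classify_dec (hT : IsKohnert α T)
    (hdec : ∀ j j', 1 ≤ j → j ≤ j' → j' ≤ α.length → Ath α j' ≤ Ath α j) :
    T = basicFilling α := by
  funext p
  rcases p with ⟨r, c⟩
  unfold basicFilling
  simp only
  by_cases h : 1 ≤ r ∧ r ≤ α.length ∧ 1 ≤ c ∧ c ≤ α.getD (r - 1) 0
  · rw [if_pos h]
    have hcA : c ≤ Ath α r := h.2.2.2
    exact forced hT h.2.2.1 r h.1 h.2.1
      (fun j' hj1 hj2 => le_trans hcA (hdec j' r hj1 hj2 h.2.1))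
  · rw [if_neg h]
    by_contra hne
    have hb := kohnert_bounds hT hne
    have hforce : T (T (r, c), c) = T (r, c) :=
      forced hT hb.2.2.1 _ hb.1 hb.2.1
        (fun j' hj1 hj2 => le_trans hb.2.2.2.1 (hdec j' _ hj1 hj2 hb.2.1))
    obtain ⟨r0, hr0, huniq⟩ := exists_unique_row hT hb.1 hb.2.1 hb.2.2.1 hb.2.2.2.1
    have e1 : r = r0 := huniq r rfl
    have e2 : T (r, c) = r0 := huniq _ hforce
    have hcA : c ≤ Ath α r := by rw [e1, ← e2]; exact hb.2.2.2.1
    exact h ⟨hb.2.2.2.2.1, by omega, hb.2.2.1, hcA⟩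

/-- `α` is special with unique ascent at `i`. -/
def Sp (α : List ℕ) (i : ℕ) : Prop :=
  1 ≤ i ∧ i + 1 ≤ α.length ∧ Ath α (i+1) = Ath α i + 1 ∧
  (∀ j j', 1 ≤ j → j < j' → j' ≤ α.length → ¬(j = i ∧ j' = i+1) → Ath α j' ≤ Ath α j)

lemma classify_sp (hT : IsKohnert α T) {i : ℕ} (hsp : Sp α i) :
    T = basicFilling α ∨ T = toFill α (fI (i+1) (Ath α i + 1) i) := by
  obtain ⟨hi1, hil, hgap, hmono⟩ := hsp
  set k := Ath α i with hk
  -- forced everywhere except the slot (i+1, k+1)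
  have F1 : ∀ j, 1 ≤ j → j ≤ α.length → ∀ c, 1 ≤ c → c ≤ Ath α j →
      ¬(j = i+1 ∧ c = k+1) → T (j, c) = j := by
    intro j hj1 hj2 c hc1 hc2 hnot
    apply forced hT hc1 j hj1 hj2
    intro j' hj'1 hj'2
    rcases Nat.eq_or_lt_of_le hj'2 with heq | hj'j
    · rw [heq]; exact hc2
    · by_cases hcase : j' = i ∧ j = i+1
      · have hc3 : c ≤ k + 1 := by rw [← hgap, ← hcase.2]; exact hc2
        have hc4 : c ≠ k + 1 := fun hcc => hnot ⟨hcase.2, hcc⟩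
        rw [hcase.1, ← hk]
        omega
      · exact le_trans hc2 (hmono j' j hj'1 hj'j hj2 hcase)
  -- the unique row of entry i+1 in column k+1
  obtain ⟨rs, hrs, hus⟩ := exists_unique_row hT (j := i+1) (c := k+1)
    (by omega) hil (by omega) (le_of_eq hgap.symm)
  have hrs_bounds := kohnert_bounds hT (r := rs) (c := k+1) (by rw [hrs]; omega)
  rw [hrs] at hrs_bounds
  have hrs_cases : rs = i ∨ rs = i + 1 := by
    rcases Nat.lt_or_ge rs i with hlt | hge
    · exfalso
      have hfr : T (rs, k+1) = rs := by
        apply forced hT (by omega) rs (by omega) (by omega)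
        intro j' hj1 hj2
        have := hmono j' (i+1) hj1 (by omega) hil (by omega)
        omega
      rw [hfr] at hrs
      omega
    · omega
  -- dichotomy for all nonzero cells
  have hD : ∀ r c, T (r, c) ≠ 0 →
      (T (r, c) = i+1 ∧ c = k+1 ∧ r = rs) ∨
      (r = T (r, c) ∧ ¬(T (r, c) = i+1 ∧ c = k+1)) := by
    intro r c hne
    have hb := kohnert_bounds hT hne
    by_cases hcase : T (r, c) = i+1 ∧ c = k+1
    · left
      refine ⟨hcase.1, hcase.2, ?_⟩
      apply hus
      rw [← hcase.2]
      exact hcase.1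
    · right
      have hTj := F1 _ hb.1 hb.2.1 c hb.2.2.1 hb.2.2.2.1 hcase
      obtain ⟨r0, hr0, hu0⟩ := exists_unique_row hT hb.1 hb.2.1 hb.2.2.1 hb.2.2.2.1
      have e1 : r = r0 := hu0 r rfl
      have e2 : T (r, c) = r0 := hu0 _ hTj
      exact ⟨by omega, hcase⟩
  -- helper hypotheses for the fI filler
  have hx1 : 1 ≤ i := hi1
  have hxi : i < i + 1 := by omega
  have hex : Ath α i < k + 1 := by omega
  have hei : k + 1 ≤ Ath α (i+1) := by omega
  have h4 : ∀ j, 1 ≤ j → j < i + 1 → k + 1 ≤ Ath α j → j < i := by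
    intro j hj1 hj2 hj3
    rcases Nat.lt_or_ge j i with h | h
    · exact h
    · exfalso
      have : j = i := by omega
      rw [this] at hj3
      omega
  have hdF := fI_hd hx1 hxi hil hex hei h4
  rcases hrs_cases with hcase | hcase
  · -- T = the moved tableau
    right
    funext p
    rcases p with ⟨r, c⟩
    by_cases hne : T (r, c) = 0
    · rw [hne]
      by_contra hne2
      obtain ⟨hV, hf⟩ := toFill_apply_ne (α := α) (f := fI (i+1) (k+1) i) rfl (Ne.symm hne2)
      have hfi : fI (i+1) (k+1) i (toFill α (fI (i+1) (k+1) i) (r, c)) c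
          = if toFill α (fI (i+1) (k+1) i) (r, c) = i+1 ∧ k+1 ≤ c then i
            else toFill α (fI (i+1) (k+1) i) (r, c) := rfl
      rw [hfi] at hf
      by_cases hov : toFill α (fI (i+1) (k+1) i) (r, c) = i + 1 ∧ k + 1 ≤ c
      · rw [if_pos hov] at hf
        have hck : c = k + 1 := by
          have h5 := hV.2.2.2
          rw [hov.1, hgap] at h5
          omega
        rw [hcase] at hrs
        have h10 : T (r, c) = i + 1 := by
          rw [hck, ← hf]
          exact hrs
        omega
      · rw [if_neg hov] at hf
        have hT1 : T (toFill α (fI (i+1) (k+1) i) (r, c), c)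
            = toFill α (fI (i+1) (k+1) i) (r, c) := by
          apply F1 _ hV.1 hV.2.1 c hV.2.2.1 hV.2.2.2
          rintro ⟨h1, h2⟩
          exact hov ⟨h1, by omega⟩
        rw [hf] at hT1
        have h9 := hV.1
        omega
    · rcases hD r c hne with ⟨h1, h2, h3⟩ | ⟨h1, h2⟩
      · rw [h1, h2, h3, hcase]
        have h6 : toFill α (fI (i+1) (k+1) i) (i, k+1) = i + 1 := by
          have h8 := toFill_eq hdF (j := i+1) (c := k+1) ⟨by omega, hil, by omega, by omega⟩
          have h7 : fI (i+1) (k+1) i (i+1) (k+1) = i := by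
            show (if i+1 = i+1 ∧ k+1 ≤ k+1 then i else i+1) = i
            rw [if_pos ⟨rfl, le_refl _⟩]
          rw [h7] at h8
          exact h8
        exact h6.symm
      · have hb := kohnert_bounds hT hne
        have hval : fI (i+1) (k+1) i (T (r,c)) c = T (r,c) := by
          show (if T (r,c) = i+1 ∧ k+1 ≤ c then i else T (r,c)) = T (r,c)
          rw [if_neg]
          rintro ⟨ha, hb'⟩
          apply h2
          refine ⟨ha, ?_⟩
          have hcc := hb.2.2.2.1
          rw [ha, hgap] at hcc
          omega
        have h8 := toFill_eq hdF (j := T (r,c)) (c := c)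
          ⟨hb.1, hb.2.1, hb.2.2.1, hb.2.2.2.1⟩
        rw [hval] at h8
        rw [← h1] at h8
        rw [h8]
        exact h1.symm
  · -- T = basic
    left
    funext p
    rcases p with ⟨r, c⟩
    unfold basicFilling
    simp only
    by_cases h : 1 ≤ r ∧ r ≤ α.length ∧ 1 ≤ c ∧ c ≤ α.getD (r - 1) 0
    · rw [if_pos h]
      by_cases hcase2 : r = i+1 ∧ c = k+1
      · rw [hcase2.1, hcase2.2]
        rw [← hcase]
        rw [← hcase] at hrs
        exact hrs
      · exact F1 r h.1 h.2.1 c h.2.2.1 h.2.2.2 (fun hh => hcase2 ⟨by omega, hh.2⟩)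
    · rw [if_neg h]
      by_contra hne
      have hb := kohnert_bounds hT hne
      rcases hD r c hne with ⟨h1, h2, h3⟩ | ⟨h1, h2⟩
      · apply h
        rw [h3, hcase]
        refine ⟨by omega, by omega, by omega, ?_⟩
        show c ≤ Ath α (i+1)
        rw [h2, hgap]
      · apply h
        refine ⟨hb.2.2.2.2.1, by omega, hb.2.2.1, ?_⟩
        show c ≤ Ath α r
        rw [h1]
        exact hb.2.2.2.1
end Structure


section getDhelpers

lemma getD_sset_fst {l : List ℕ} {p q x y : ℕ} (hpq : p ≠ q) (hp : p < l.length) :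
    ((l.set p x).set q y).getD p 0 = x := by
  rw [List.getD_eq_getElem _ 0 (by simpa using hp), List.getElem_set_ne (by omega),
    List.getElem_set_self]

lemma getD_sset_snd {l : List ℕ} {p q x y : ℕ} (hq : q < l.length) :
    ((l.set p x).set q y).getD q 0 = y := by
  rw [List.getD_eq_getElem _ 0 (by simpa using hq), List.getElem_set_self]

lemma getD_sset_other {l : List ℕ} {p q x y t : ℕ} (h1 : t ≠ p) (h2 : t ≠ q) :
    ((l.set p x).set q y).getD t 0 = l.getD t 0 := by
  rcases Nat.lt_or_ge t l.length with ht | ht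
  · rw [List.getD_eq_getElem _ 0 (by simpa using ht), List.getElem_set_ne (by omega),
      List.getElem_set_ne (by omega), List.getD_eq_getElem _ 0 ht]
  · rw [List.getD_eq_default _ 0 (by simpa using ht), List.getD_eq_default _ 0 ht]

end getDhelpers

section fDsection

def fD (i k : ℕ) : ℕ → ℕ → ℕ := fun j c =>
  if j = i+1 ∧ c = k+1 then i else if j = i+2 ∧ c = k+1 then i+1 else j

variable {α : List ℕ} {i k : ℕ}
variable (hi1 : 1 ≤ i) (hil : i + 2 ≤ α.length)
variable (hk0 : Ath α i = k) (hk1 : Ath α (i+1) = k+1) (hk2 : Ath α (i+2) = k+1)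

include hi1 hil hk0 hk1 hk2

lemma fD_hd : ColIncr α (fD i k) := by
  intro j j' c hV hV' hjj
  unfold fD
  by_cases hc : c = k + 1
  · subst hc
    have hji : j ≠ i := by
      rintro rfl
      have := hV.2.2.2
      omega
    have hji' : j' ≠ i := by
      rintro rfl
      have := hV'.2.2.2
      omega
    by_cases h1 : j = i + 1
    · rw [if_pos ⟨h1, rfl⟩]
      have h2 : ¬ (j' = i+1 ∧ (k:ℕ)+1 = k+1) := by rintro ⟨rfl, -⟩; omega
      rw [if_neg h2]
      by_cases h3 : j' = i + 2
      · rw [if_pos ⟨h3, rfl⟩]; omega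
      · rw [if_neg (by rintro ⟨rfl, -⟩; exact h3 rfl)]; omega
    · rw [if_neg (by rintro ⟨rfl, -⟩; exact h1 rfl)]
      by_cases h3 : j = i + 2
      · rw [if_pos ⟨h3, rfl⟩]
        rw [if_neg (by rintro ⟨rfl, -⟩; omega), if_neg (by rintro ⟨rfl, -⟩; omega)]
        omega
      · rw [if_neg (by rintro ⟨rfl, -⟩; exact h3 rfl)]
        by_cases h4 : j' = i + 1
        · rw [if_pos ⟨h4, rfl⟩]; omega
        · rw [if_neg (by rintro ⟨rfl, -⟩; exact h4 rfl)]
          by_cases h5 : j' = i + 2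
          · rw [if_pos ⟨h5, rfl⟩]; omega
          · rw [if_neg (by rintro ⟨rfl, -⟩; exact h5 rfl)]; omega
  · rw [if_neg (by rintro ⟨-, h⟩; exact hc h), if_neg (by rintro ⟨-, h⟩; exact hc h),
      if_neg (by rintro ⟨-, h⟩; exact hc h), if_neg (by rintro ⟨-, h⟩; exact hc h)]
    omega

lemma fD_kohnert : IsKohnert α (toFill α (fD i k)) := by
  apply IsKohnert_toFill
  · intro j c hV
    unfold fD
    by_cases h1 : j = i+1 ∧ c = k+1
    · rw [if_pos h1]; omega
    · rw [if_neg h1]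
      by_cases h2 : j = i+2 ∧ c = k+1
      · rw [if_pos h2]; omega
      · rw [if_neg h2]; exact ⟨hV.1, le_rfl⟩
  · intro j c c' hV hV' hcc
    unfold fD
    have hle : c' ≤ k + 1 → c ≤ k + 1 := fun h => le_trans hcc h
    by_cases h1 : j = i+1 ∧ c = k+1
    · have hc' : c' = k + 1 := by
        have := hV'.2.2.2
        rw [h1.1, hk1] at this
        omega
      rw [if_pos h1, if_pos ⟨h1.1, hc'⟩]
    · rw [if_neg h1]
      by_cases h2 : j = i+2 ∧ c = k+1
      · have hc' : c' = k + 1 := by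
          have := hV'.2.2.2
          rw [h2.1, hk2] at this
          omega
        rw [if_pos h2, if_neg (by rintro ⟨rfl, -⟩; omega), if_pos ⟨h2.1, hc'⟩]
      · rw [if_neg h2]
        by_cases h3 : j = i+1 ∧ c' = k+1
        · rw [if_pos h3]; omega
        · rw [if_neg h3]
          by_cases h4 : j = i+2 ∧ c' = k+1
          · rw [if_pos h4]; omega
          · rw [if_neg h4]
  · exact fD_hd hi1 hil hk0 hk1 hk2

lemma fD_wt : wtList α (toFill α (fD i k)) = (α.set (i-1) (k+1)).set (i+1) k := by
  have hd := fD_hd hi1 hil hk0 hk1 hk2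
  have hsum : k + 1 ≤ α.sum := by
    have := Ath_le_sum α (by omega : 1 ≤ i+1) (by omega)
    omega
  apply List.ext_getElem
  · rw [wtList_length]; simp
  · intro t ht1 ht2
    have htl : t < α.length := by simpa using ht2
    rw [wtList_getElem α _ htl]
    by_cases hti : t = i - 1
    · -- row i : count k+1 via two intervals
      subst hti
      rw [List.getElem_set_ne (by omega), List.getElem_set_self]
      rw [count_Icc_two (t := k) (u := k+1) (v := k+1) ?_ (by omega) le_rfl hsum]
      · omega
      · intro c hc1 hcS
        rw [Ne, ← ne_eq, toFill_ne_zero_iff hd]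
        constructor
        · rintro ⟨j, hV, hf⟩
          unfold fD at hf
          by_cases h1 : j = i+1 ∧ c = k+1
          · rw [if_pos h1] at hf; right; omega
          · rw [if_neg h1] at hf
            by_cases h2 : j = i+2 ∧ c = k+1
            · rw [if_pos h2] at hf; omega
            · rw [if_neg h2] at hf
              left
              have hji : j = i := by omega
              have := hV.2.2.2
              rw [hji, hk0] at this
              omega
        · rintro (hc | ⟨hc', hc''⟩)
          · refine ⟨i, ⟨by omega, by omega, hc1, by omega⟩, ?_⟩
            unfold fD
            rw [if_neg (by rintro ⟨h, -⟩; omega), if_neg (by rintro ⟨h, -⟩; omega)]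
            omega
          · refine ⟨i+1, ⟨by omega, by omega, hc1, by omega⟩, ?_⟩
            unfold fD
            rw [if_pos ⟨rfl, by omega⟩]
            omega
    · by_cases hti1 : t = i
      · -- row i+1 : count k+1
        have hit : i = t := hti1.symm
        subst hit
        rw [List.getElem_set_ne (by omega), List.getElem_set_ne (by omega)]
        rw [Ath_getElem α htl, hk1]
        rw [count_Icc (t := k+1) ?_ hsum]
        intro c hc1 hcS
        rw [Ne, ← ne_eq, toFill_ne_zero_iff hd]
        constructor
        · rintro ⟨j, hV, hf⟩
          unfold fD at hf
          by_cases h1 : j = i+1 ∧ c = k+1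
          · rw [if_pos h1] at hf; omega
          · rw [if_neg h1] at hf
            by_cases h2 : j = i+2 ∧ c = k+1
            · rw [if_pos h2] at hf; omega
            · rw [if_neg h2] at hf
              have hji : j = i + 1 := by omega
              have := hV.2.2.2
              rw [hji, hk1] at this
              omega
        · intro hc
          by_cases hck : c = k + 1
          · refine ⟨i+2, ⟨by omega, by omega, hc1, by rw [hk2]; omega⟩, ?_⟩
            unfold fD
            rw [if_neg (by rintro ⟨h, -⟩; omega), if_pos ⟨rfl, hck⟩]
          · refine ⟨i+1, ⟨by omega, by omega, hc1, by rw [hk1]; omega⟩, ?_⟩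
            unfold fD
            rw [if_neg (by rintro ⟨-, h⟩; exact hck h), if_neg (by rintro ⟨h, -⟩; omega)]
      · by_cases hti2 : t = i + 1
        · -- row i+2 : count k
          subst hti2
          rw [List.getElem_set_self]
          rw [count_Icc (t := k) ?_ (by omega)]
          intro c hc1 hcS
          rw [Ne, ← ne_eq, toFill_ne_zero_iff hd]
          constructor
          · rintro ⟨j, hV, hf⟩
            unfold fD at hf
            by_cases h1 : j = i+1 ∧ c = k+1
            · rw [if_pos h1] at hf; omega
            · rw [if_neg h1] at hf
              by_cases h2 : j = i+2 ∧ c = k+1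
              · rw [if_pos h2] at hf; omega
              · rw [if_neg h2] at hf
                have hji : j = i + 2 := by omega
                have := hV.2.2.2
                rw [hji, hk2] at this
                have hck : c ≠ k + 1 := fun hcc => h2 ⟨hji, hcc⟩
                omega
          · intro hc
            refine ⟨i+2, ⟨by omega, by omega, hc1, by rw [hk2]; omega⟩, ?_⟩
            unfold fD
            rw [if_neg (by rintro ⟨h, -⟩; omega), if_neg (by rintro ⟨-, h⟩; omega)]
        · -- other rows : count Ath α (t+1)
          rw [List.getElem_set_ne (by omega), List.getElem_set_ne (by omega)]
          rw [Ath_getElem α htl]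
          rw [count_Icc (t := Ath α (t+1)) ?_ (Ath_le_sum α (by omega) (by omega))]
          intro c hc1 hcS
          rw [Ne, ← ne_eq, toFill_ne_zero_iff hd]
          constructor
          · rintro ⟨j, hV, hf⟩
            unfold fD at hf
            by_cases h1 : j = i+1 ∧ c = k+1
            · rw [if_pos h1] at hf; omega
            · rw [if_neg h1] at hf
              by_cases h2 : j = i+2 ∧ c = k+1
              · rw [if_pos h2] at hf; omega
              · rw [if_neg h2] at hf
                rw [← hf]
                exact hV.2.2.2
          · intro hc
            refine ⟨t+1, ⟨by omega, by omega, hc1, hc⟩, ?_⟩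
            unfold fD
            rw [if_neg (by rintro ⟨h, -⟩; omega), if_neg (by rintro ⟨h, -⟩; omega)]

end fDsection

section Finiteness

lemma isKohnert_setFinite (α : List ℕ) : {T : ℕ × ℕ → ℕ | IsKohnert α T}.Finite := by
  set S := {T : ℕ × ℕ → ℕ | IsKohnert α T} with hS
  have hbound : ∀ T ∈ S, ∀ r c : ℕ, T (r, c) < α.length + 1 := by
    intro T hT r c
    by_cases h : T (r, c) = 0
    · omega
    · have := (kohnert_bounds hT h).2.1
      omega
  have hzero : ∀ T ∈ S, ∀ r c : ℕ, ¬(r < α.length + 1 ∧ c < α.sum + 1) → T (r, c) = 0 := by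
    intro T hT r c h
    by_contra hne
    have hb := kohnert_bounds hT hne
    have hc2 : c ≤ α.sum := le_trans hb.2.2.2.1 (Ath_le_sum α hb.1 hb.2.1)
    have hr : T (r, c) ≤ α.length := hb.2.1
    omega
  have hfin : Finite ↥S := by
    apply Finite.of_injective
      (f := fun (T : ↥S) (p : Fin (α.length + 1) × Fin (α.sum + 1)) =>
        (⟨T.1 (p.1, p.2), hbound T.1 T.2 p.1 p.2⟩ : Fin (α.length + 1)))
    rintro ⟨T, hT⟩ ⟨T', hT'⟩ h
    ext1
    funext p
    rcases p with ⟨r, c⟩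
    show T (r, c) = T' (r, c)
    by_cases hrc : r < α.length + 1 ∧ c < α.sum + 1
    · have h2 := congrFun h (⟨r, hrc.1⟩, ⟨c, hrc.2⟩)
      simpa using h2
    · rw [hzero T hT r c hrc, hzero T' hT' r c hrc]
  exact Set.finite_coe_iff.mp hfin

lemma keyCoeff_pos {α b : List ℕ} {T : ℕ × ℕ → ℕ} (hT : IsKohnert α T) (hw : wtList α T = b) :
    1 ≤ keyCoeff α b := by
  unfold keyCoeff
  have hfin : {T : ℕ × ℕ → ℕ | IsKohnert α T ∧ wtList α T = b}.Finite :=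
    Set.Finite.subset (isKohnert_setFinite α) (fun T h => h.1)
  have := (Set.ncard_pos hfin).mpr ⟨T, hT, hw⟩
  omega

lemma keyCoeff_nonempty {α b : List ℕ} (h : keyCoeff α b ≠ 0) :
    ∃ T, IsKohnert α T ∧ wtList α T = b := by
  have := Set.nonempty_of_ncard_ne_zero h
  obtain ⟨T, hT⟩ := this
  exact ⟨T, hT⟩

end Finiteness

section KeyCoeffSp

/-- the swapped weight -/
def wSw (α : List ℕ) (i : ℕ) : List ℕ := (α.set (i-1) (Ath α i + 1)).set i (Ath α i)

lemma wSw_ne {α : List ℕ} {i : ℕ} (hi1 : 1 ≤ i) (hil : i + 1 ≤ α.length) :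
    wSw α i ≠ α := by
  intro h
  have h1 : (wSw α i).getD (i-1) 0 = Ath α i + 1 :=
    getD_sset_fst (by omega) (by omega)
  rw [h] at h1
  unfold Ath at h1
  omega

lemma wt_tab2 {α : List ℕ} {i : ℕ} (hsp : Sp α i) :
    wtList α (toFill α (fI (i+1) (Ath α i + 1) i)) = wSw α i := by
  obtain ⟨hi1, hil, hgap, hmono⟩ := hsp
  have h4 : ∀ j, 1 ≤ j → j < i + 1 → Ath α i + 1 ≤ Ath α j → j < i := by
    intro j hj1 hj2 hj3
    rcases Nat.lt_or_ge j i with h | h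
    · exact h
    · exfalso
      have : j = i := by omega
      rw [this] at hj3
      omega
  have := fI_wt (α := α) (i := i+1) (e := Ath α i + 1) (x := i)
    hi1 (by omega) hil (by omega) (by omega) h4
  rw [this]
  unfold wSw
  have e1 : Ath α i + (Ath α (i+1) + 1 - (Ath α i + 1)) = Ath α i + 1 := by omega
  have e2 : i + 1 - 1 = i := by omega
  have e3 : Ath α i + 1 - 1 = Ath α i := by omega
  rw [e1, e2, e3]

lemma keyCoeff_sp {α : List ℕ} {i : ℕ} (hsp : Sp α i) (b : List ℕ) :
    keyCoeff α b = (if b = α then 1 else 0) + (if b = wSw α i then 1 else 0) := by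
  obtain ⟨hi1, hil, hgap, hmono⟩ := hsp
  have h4 : ∀ j, 1 ≤ j → j < i + 1 → Ath α i + 1 ≤ Ath α j → j < i := by
    intro j hj1 hj2 hj3
    rcases Nat.lt_or_ge j i with h | h
    · exact h
    · exfalso
      have : j = i := by omega
      rw [this] at hj3
      omega
  have htabK : IsKohnert α (toFill α (fI (i+1) (Ath α i + 1) i)) :=
    fI_kohnert hi1 (by omega) hil (by omega) (by omega) h4
  have hwt2 : wtList α (toFill α (fI (i+1) (Ath α i + 1) i)) = wSw α i :=
    wt_tab2 ⟨hi1, hil, hgap, hmono⟩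
  have hwne : wSw α i ≠ α := wSw_ne hi1 hil
  unfold keyCoeff
  by_cases hbα : b = α
  · rw [if_pos hbα, if_neg (by rw [hbα]; exact fun h => hwne h.symm)]
    have hset : {T : ℕ × ℕ → ℕ | IsKohnert α T ∧ wtList α T = b} = {basicFilling α} := by
      ext T
      simp only [Set.mem_setOf_eq, Set.mem_singleton_iff]
      constructor
      · rintro ⟨hT, hw⟩
        rcases classify_sp hT ⟨hi1, hil, hgap, hmono⟩ with h | h
        · exact h
        · exfalso
          rw [h, hwt2] at hw
          rw [hbα] at hw
          exact hwne hw
      · rintro rfl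
        exact ⟨IsKohnert_basic α, by rw [wt_basic, hbα]⟩
    rw [hset, Set.ncard_singleton]
  · rw [if_neg hbα]
    by_cases hbw : b = wSw α i
    · rw [if_pos hbw]
      have hset : {T : ℕ × ℕ → ℕ | IsKohnert α T ∧ wtList α T = b}
          = {toFill α (fI (i+1) (Ath α i + 1) i)} := by
        ext T
        simp only [Set.mem_setOf_eq, Set.mem_singleton_iff]
        constructor
        · rintro ⟨hT, hw⟩
          rcases classify_sp hT ⟨hi1, hil, hgap, hmono⟩ with h | h
          · exfalso
            rw [h, wt_basic] at hw
            exact hbα hw.symm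
          · exact h
        · rintro rfl
          exact ⟨htabK, by rw [hwt2, hbw]⟩
      rw [hset, Set.ncard_singleton]
    · rw [if_neg hbw]
      have hset : {T : ℕ × ℕ → ℕ | IsKohnert α T ∧ wtList α T = b} = ∅ := by
        ext T
        simp only [Set.mem_setOf_eq, Set.mem_empty_iff_false, iff_false]
        rintro ⟨hT, hw⟩
        rcases classify_sp hT ⟨hi1, hil, hgap, hmono⟩ with h | h
        · rw [h, wt_basic] at hw
          exact hbα hw.symm
        · rw [h, hwt2] at hw
          exact hbw hw.symm
      rw [hset, Set.ncard_empty]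

end KeyCoeffSp


section Master

lemma mono_of_adj {α : List ℕ} {lo hi : ℕ}
    (h : ∀ p, lo ≤ p → p + 1 ≤ hi → Ath α (p+1) ≤ Ath α p) :
    ∀ j j', lo ≤ j → j ≤ j' → j' ≤ hi → Ath α j' ≤ Ath α j := by
  have key : ∀ d j, lo ≤ j → j + d ≤ hi → Ath α (j + d) ≤ Ath α j := by
    intro d
    induction d with
    | zero => intro j _ _; simp
    | succ d ih =>
      intro j hj hjd
      calc Ath α (j + (d+1)) = Ath α ((j + d) + 1) := by ring_nf
      _ ≤ Ath α (j + d) := h (j + d) (by omega) (by omega)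
      _ ≤ Ath α j := ih j hj (by omega)
  intro j j' hj hjj hj'
  have := key (j' - j) j hj (by omega)
  rw [(by omega : j + (j' - j) = j')] at this
  exact this

lemma sset_ne {α : List ℕ} {p q x y : ℕ} (hpq : p ≠ q) (hp : p < α.length)
    (hx : α.getD p 0 ≠ x) : (α.set p x).set q y ≠ α := by
  intro h
  apply hx
  have h2 := getD_sset_fst (l := α) (x := x) (y := y) hpq hp
  rw [h] at h2
  exact h2

lemma fund_self (β : List ℕ) : fundCoeff β β = 1 := by
  unfold fundCoeff
  rw [if_pos ⟨rfl, fun i => le_refl _, refines_refl _⟩]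

lemma master {α : List ℕ} (hpos : ∀ x ∈ α, 0 < x) {β : List ℕ} (hβ : β ≠ α)
    (hid : ∀ b, keyCoeff α b = fundCoeff α b + fundCoeff β b) :
    ∃ i, Sp α i ∧ β = wSw α i := by
  have hfα : ∀ b, fundCoeff α b = if b = α then 1 else 0 := fundCoeff_strong hpos
  have h1 : keyCoeff α β = 1 := by
    have h2 := hid β
    rw [hfα β, if_neg hβ, fund_self β] at h2
    omega
  obtain ⟨T0, hT0, hw0⟩ := keyCoeff_nonempty (α := α) (b := β) (by omega)
  have hβpos : ∀ x ∈ β, 0 < x := by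
    rw [← hw0]; exact wt_pos hpos hT0
  have hfβ : ∀ b, fundCoeff β b = if b = β then 1 else 0 := fundCoeff_strong hβpos
  have hid' : ∀ b, keyCoeff α b = (if b = α then 1 else 0) + (if b = β then 1 else 0) := by
    intro b; rw [hid b, hfα b, hfβ b]
  have hwit : ∀ b, b ≠ α → (∃ T, IsKohnert α T ∧ wtList α T = b) → b = β := by
    intro b hbα hex
    obtain ⟨T, hT, hw⟩ := hex
    have hge := keyCoeff_pos hT hw
    rw [hid' b, if_neg hbα] at hge
    by_cases h : b = β
    · exact h
    · rw [if_neg h] at hge; omega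
  -- α is not weakly decreasing
  by_cases hdec : ∀ p, 1 ≤ p → p + 1 ≤ α.length → Ath α (p+1) ≤ Ath α p
  · exfalso
    have hdec' : ∀ j j', 1 ≤ j → j ≤ j' → j' ≤ α.length → Ath α j' ≤ Ath α j :=
      mono_of_adj hdec
    have hb := classify_dec hT0 hdec'
    rw [hb, wt_basic] at hw0
    exact hβ hw0.symm
  · push_neg at hdec
    obtain ⟨p0, hp01, hp0l, hp0asc⟩ := hdec
    have hP : ∃ p, 1 ≤ p ∧ p + 1 ≤ α.length ∧ Ath α p < Ath α (p+1) :=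
      ⟨p0, hp01, hp0l, hp0asc⟩
    classical
    set i := Nat.find hP with hidef
    obtain ⟨hi1, hil, hasc⟩ : 1 ≤ i ∧ i + 1 ≤ α.length ∧ Ath α i < Ath α (i+1) :=
      Nat.find_spec hP
    have hmin : ∀ p, p < i → ¬(1 ≤ p ∧ p + 1 ≤ α.length ∧ Ath α p < Ath α (p+1)) :=
      fun p hp => Nat.find_min hP hp
    have hpre_adj : ∀ p, 1 ≤ p → p + 1 ≤ i → Ath α (p+1) ≤ Ath α p := by
      intro p hp hpi
      by_contra h
      exact hmin p (by omega) ⟨hp, by omega, by omega⟩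
    have hpre : ∀ j j', 1 ≤ j → j ≤ j' → j' ≤ i → Ath α j' ≤ Ath α j :=
      mono_of_adj hpre_adj
    -- generic move construction for any ascent
    have hmove : ∀ p, 1 ≤ p → p + 1 ≤ α.length → Ath α p < Ath α (p+1) →
        ∃ T, IsKohnert α T ∧
          wtList α T = (α.set (p-1) (Ath α p + 1)).set p (Ath α (p+1) - 1) := by
      intro p hp1 hpl hpasc
      have h4 : ∀ j, 1 ≤ j → j < p + 1 → Ath α (p+1) ≤ Ath α j → j < p := by
        intro j hj1 hj2 hj3
        rcases Nat.lt_or_ge j p with h | h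
        · exact h
        · exfalso
          have : j = p := by omega
          rw [this] at hj3
          omega
      refine ⟨toFill α (fI (p+1) (Ath α (p+1)) p), ?_, ?_⟩
      · exact fI_kohnert hp1 (by omega) hpl hpasc le_rfl h4
      · rw [fI_wt hp1 (by omega) hpl hpasc le_rfl h4]
        have e1 : Ath α p + (Ath α (p+1) + 1 - Ath α (p+1)) = Ath α p + 1 := by omega
        have e2 : p + 1 - 1 = p := by omega
        rw [e1, e2]
    -- the standard witness weight at i
    have hw1 : ∃ T, IsKohnert α T ∧
        wtList α T = (α.set (i-1) (Ath α i + 1)).set i (Ath α (i+1) - 1) :=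
      hmove i hi1 hil hasc
    have hw1ne : (α.set (i-1) (Ath α i + 1)).set i (Ath α (i+1) - 1) ≠ α := by
      apply sset_ne (by omega) (by omega)
      show Ath α i ≠ Ath α i + 1
      omega
    have hw1β : (α.set (i-1) (Ath α i + 1)).set i (Ath α (i+1) - 1) = β :=
      hwit _ hw1ne hw1
    -- CASE A: the gap must be 1
    have hgap : Ath α (i+1) = Ath α i + 1 := by
      by_contra hg
      have hA : Ath α i + 2 ≤ Ath α (i+1) := by omega
      have h4 : ∀ j, 1 ≤ j → j < i + 1 → Ath α (i+1) - 1 ≤ Ath α j → j < i := by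
        intro j hj1 hj2 hj3
        rcases Nat.lt_or_ge j i with h | h
        · exact h
        · exfalso
          have : j = i := by omega
          rw [this] at hj3
          omega
      have hT2k : IsKohnert α (toFill α (fI (i+1) (Ath α (i+1) - 1) i)) :=
        fI_kohnert hi1 (by omega) hil (by omega) (by omega) h4
      have hT2w := fI_wt (α := α) (i := i+1) (e := Ath α (i+1) - 1) (x := i)
        hi1 (by omega) hil (by omega) (by omega) h4
      have e1 : Ath α i + (Ath α (i+1) + 1 - (Ath α (i+1) - 1)) = Ath α i + 2 := by omega
      have e2 : i + 1 - 1 = i := by omega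
      rw [e1, e2] at hT2w
      have hw2ne : (α.set (i-1) (Ath α i + 2)).set i (Ath α (i+1) - 1 - 1) ≠ α := by
        apply sset_ne (by omega) (by omega)
        show Ath α i ≠ Ath α i + 2
        omega
      have hw2β := hwit _ hw2ne ⟨_, hT2k, hT2w⟩
      rw [← hw1β] at hw2β
      have hcon := getD_sset_fst (l := α) (x := Ath α i + 2)
        (y := Ath α (i+1) - 1 - 1) (p := i-1) (q := i) (by omega) (by omega)
      rw [hw2β] at hcon
      rw [getD_sset_fst (by omega) (by omega)] at hcon
      omega
    -- CASE D: no ascent in the suffix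
    have hsuf_adj : ∀ p, i + 1 ≤ p → p + 1 ≤ α.length → Ath α (p+1) ≤ Ath α p := by
      intro p hpi hpl
      by_contra h
      obtain ⟨T2, hT2k, hT2w⟩ := hmove p (by omega) (by omega) (by omega)
      have hw2ne : (α.set (p-1) (Ath α p + 1)).set p (Ath α (p+1) - 1) ≠ α := by
        apply sset_ne (by omega) (by omega)
        show Ath α p ≠ Ath α p + 1
        omega
      have hw2β := hwit _ hw2ne ⟨T2, hT2k, hT2w⟩
      rw [← hw1β] at hw2β
      -- compare at index i-1
      have hc1 := getD_sset_fst (l := α) (x := Ath α i + 1)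
        (y := Ath α (i+1) - 1) (p := i-1) (q := i) (by omega) (by omega)
      rw [← hw2β] at hc1
      rw [getD_sset_other (by omega) (by omega)] at hc1
      have : α.getD (i-1) 0 = Ath α i := rfl
      omega
    have hsuf : ∀ j j', i + 1 ≤ j → j ≤ j' → j' ≤ α.length → Ath α j' ≤ Ath α j :=
      mono_of_adj hsuf_adj
    -- CASE B: prefix strictly above Ath α i
    have hpreB : ∀ j, 1 ≤ j → j < i → Ath α i + 1 ≤ Ath α j := by
      intro j hj1 hji
      have hge : Ath α i ≤ Ath α j := hpre j i hj1 (by omega) le_rfl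
      by_contra h
      have heq : Ath α j = Ath α i := by omega
      have h4 : ∀ j'', 1 ≤ j'' → j'' < i + 1 → Ath α i + 1 ≤ Ath α j'' → j'' < j := by
        intro j'' h1' h2' h3'
        by_contra hcon
        push_neg at hcon
        have := hpre j j'' hj1 hcon (by omega)
        omega
      have hT3k : IsKohnert α (toFill α (fI (i+1) (Ath α i + 1) j)) :=
        fI_kohnert hj1 (by omega) hil (by omega) (by omega) h4
      have hT3w := fI_wt (α := α) (i := i+1) (e := Ath α i + 1) (x := j)
        hj1 (by omega) hil (by omega) (by omega) h4
      have e1 : Ath α j + (Ath α (i+1) + 1 - (Ath α i + 1)) = Ath α i + 1 := by omega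
      have e2 : i + 1 - 1 = i := by omega
      have e3 : Ath α i + 1 - 1 = Ath α i := by omega
      rw [e1, e2, e3] at hT3w
      have hw3ne : (α.set (j-1) (Ath α i + 1)).set i (Ath α i) ≠ α := by
        apply sset_ne (by omega) (by omega)
        show Ath α j ≠ Ath α i + 1
        omega
      have hw3β := hwit _ hw3ne ⟨_, hT3k, hT3w⟩
      rw [← hw1β] at hw3β
      -- compare at index j-1
      have hc1 := getD_sset_fst (l := α) (x := Ath α i + 1)
        (y := Ath α i) (p := j-1) (q := i) (by omega) (by omega)
      rw [hw3β] at hc1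
      rw [getD_sset_other (by omega) (by omega)] at hc1
      have : α.getD (j-1) 0 = Ath α j := rfl
      omega
    -- CASE C
    have hC : ∀ _ : i + 2 ≤ α.length, Ath α (i+2) ≤ Ath α i := by
      intro h2l
      have hle : Ath α (i+2) ≤ Ath α (i+1) := hsuf_adj (i+1) le_rfl h2l
      by_contra h
      have heq2 : Ath α (i+2) = Ath α i + 1 := by omega
      have hT4k : IsKohnert α (toFill α (fD i (Ath α i))) :=
        fD_kohnert hi1 h2l rfl hgap heq2
      have hT4w : wtList α (toFill α (fD i (Ath α i)))
          = (α.set (i-1) (Ath α i + 1)).set (i+1) (Ath α i) :=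
        fD_wt hi1 h2l rfl hgap heq2
      have hw4ne : (α.set (i-1) (Ath α i + 1)).set (i+1) (Ath α i) ≠ α := by
        apply sset_ne (by omega) (by omega)
        show Ath α i ≠ Ath α i + 1
        omega
      have hw4β := hwit _ hw4ne ⟨_, hT4k, hT4w⟩
      rw [← hw1β] at hw4β
      -- compare at index i
      have hc1 := getD_sset_snd (l := α) (p := i-1) (x := Ath α i + 1)
        (y := Ath α (i+1) - 1) (q := i) (by omega)
      rw [← hw4β] at hc1
      rw [getD_sset_other (by omega) (by omega)] at hc1
      have h5 : α.getD i 0 = Ath α (i+1) := rfl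
      omega
    -- conclude Sp α i
    have hsp : Sp α i := by
      refine ⟨hi1, hil, hgap, ?_⟩
      intro j j' hj1 hjj' hj'l hne
      rcases Nat.lt_or_ge j' (i+1) with h | h
      · exact hpre j j' hj1 (by omega) (by omega)
      · rcases Nat.lt_or_ge j (i+1) with h2 | h2
        · rcases Nat.eq_or_lt_of_le h with heq | hlt
          · -- j' = i+1
            have hji : j ≠ i := fun hh => hne ⟨hh, heq.symm⟩
            have := hpreB j hj1 (by omega)
            rw [← heq]
            omega
          · -- j' ≥ i+2
            have hC' := hC (by omega)
            have h5 : Ath α j' ≤ Ath α (i+2) := hsuf (i+2) j' (by omega) (by omega) (by omega)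
            have h6 : Ath α i ≤ Ath α j := hpre j i hj1 (by omega) le_rfl
            omega
        · exact hsuf j j' (by omega) (by omega) (by omega)
    refine ⟨i, hsp, ?_⟩
    rw [← hw1β]
    unfold wSw
    have e1 : Ath α (i+1) - 1 = Ath α i := by omega
    rw [e1]

end Master


section Translation

lemma get_eq_Ath (α : List ℕ) (t : Fin α.length) : α.get t = Ath α ((t : ℕ) + 1) := by
  rw [List.get_eq_getElem, Ath_getElem α t.isLt]

lemma sp_invSet {α : List ℕ} (i : ℕ) (hsp : Sp α i) :
    (invSet α).card = 1 ∧ ∀ p ∈ invSet α,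
      (p.2 : ℕ) = (p.1 : ℕ) + 1 ∧ α.get p.2 = α.get p.1 + 1 := by
  obtain ⟨hi1, hil, hgap, hmono⟩ := hsp
  have hi1l : i - 1 < α.length := by omega
  have hi2l : i < α.length := by omega
  set p₀ : Fin α.length × Fin α.length := (⟨i-1, hi1l⟩, ⟨i, hi2l⟩) with hp₀
  have hmem : p₀ ∈ invSet α := by
    unfold invSet
    rw [Finset.mem_filter]
    refine ⟨Finset.mem_univ _, ?_, ?_⟩
    · show (⟨i-1, hi1l⟩ : Fin α.length) < ⟨i, hi2l⟩
      rw [Fin.mk_lt_mk]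
      omega
    · rw [get_eq_Ath, get_eq_Ath]
      show Ath α (i - 1 + 1) < Ath α (i + 1)
      rw [(by omega : i - 1 + 1 = i)]
      omega
  have huniq : ∀ q ∈ invSet α, q = p₀ := by
    rintro ⟨q1, q2⟩ hq
    unfold invSet at hq
    rw [Finset.mem_filter] at hq
    obtain ⟨-, hlt, hval⟩ := hq
    dsimp only at hlt hval
    rw [get_eq_Ath, get_eq_Ath] at hval
    have hlt' : (q1 : ℕ) < (q2 : ℕ) := hlt
    have hcase : (q1 : ℕ) + 1 = i ∧ (q2 : ℕ) + 1 = i + 1 := by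
      by_contra hcon
      have := hmono ((q1 : ℕ) + 1) ((q2 : ℕ) + 1) (by omega) (by omega)
        (by have := q2.isLt; omega) (by omega)
      omega
    have e1 : (q1 : ℕ) = i - 1 := by omega
    have e2 : (q2 : ℕ) = i := by omega
    rw [hp₀]
    ext
    · exact e1
    · exact e2
  constructor
  · rw [Finset.eq_singleton_iff_unique_mem.mpr ⟨hmem, huniq⟩, Finset.card_singleton]
  · intro p hp
    have := huniq p hp
    subst this
    constructor
    · show i = i - 1 + 1
      omega
    · rw [get_eq_Ath, get_eq_Ath]
      show Ath α (i + 1) = Ath α (i - 1 + 1) + 1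
      rw [(by omega : i - 1 + 1 = i)]
      omega

lemma invSet_sp {α : List ℕ} (hcard : (invSet α).card = 1)
    (hprop : ∀ p ∈ invSet α, (p.2 : ℕ) = (p.1 : ℕ) + 1 ∧ α.get p.2 = α.get p.1 + 1) :
    ∃ i, Sp α i := by
  obtain ⟨p₀, hp₀⟩ := Finset.card_eq_one.mp hcard
  have hmem : p₀ ∈ invSet α := hp₀ ▸ Finset.mem_singleton_self p₀
  obtain ⟨hadj, hval⟩ := hprop p₀ hmem
  have hmem' := hmem
  unfold invSet at hmem'
  rw [Finset.mem_filter] at hmem'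
  obtain ⟨-, hlt, hv⟩ := hmem'
  rw [get_eq_Ath, get_eq_Ath] at hval hv
  refine ⟨(p₀.1 : ℕ) + 1, by omega, ?_, ?_, ?_⟩
  · have h2 := p₀.2.isLt
    omega
  · rw [(by omega : (p₀.1 : ℕ) + 1 + 1 = (p₀.2 : ℕ) + 1)]
    omega
  · intro j j' hj1 hjj' hj'l hne
    by_contra hcon
    push_neg at hcon
    have hq : ((⟨j - 1, by omega⟩ : Fin α.length), (⟨j' - 1, by omega⟩ : Fin α.length))
        ∈ invSet α := by
      unfold invSet
      rw [Finset.mem_filter]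
      refine ⟨Finset.mem_univ _, ?_, ?_⟩
      · show (⟨j-1, by omega⟩ : Fin α.length) < ⟨j'-1, by omega⟩
        rw [Fin.mk_lt_mk]
        omega
      · rw [get_eq_Ath, get_eq_Ath]
        show Ath α (j - 1 + 1) < Ath α (j' - 1 + 1)
        rw [(by omega : j - 1 + 1 = j), (by omega : j' - 1 + 1 = j')]
        omega
    rw [hp₀, Finset.mem_singleton] at hq
    have e1 : j - 1 = (p₀.1 : ℕ) := by
      have := congrArg (fun q => (q.1 : ℕ)) hq
      simpa using this
    have e2 : j' - 1 = (p₀.2 : ℕ) := by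
      have := congrArg (fun q => (q.2 : ℕ)) hq
      simpa using this
    exact hne ⟨by omega, by omega⟩

end Translation

section PermSorted

lemma wSw_pos {α : List ℕ} (hpos : ∀ x ∈ α, 0 < x) (i : ℕ) (hsp : Sp α i) :
    ∀ x ∈ wSw α i, 0 < x := by
  obtain ⟨hi1, hil, -, -⟩ := hsp
  have hA : 1 ≤ Ath α i := Ath_pos hpos hi1 (by omega)
  intro x hx
  unfold wSw at hx
  rcases List.mem_or_eq_of_mem_set hx with hx1 | rfl
  · rcases List.mem_or_eq_of_mem_set hx1 with hx2 | rfl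
    · exact hpos x hx2
    · omega
  · omega

lemma perm_set_swap : ∀ (l : List ℕ) (n : ℕ) (h : n + 1 < l.length),
    ((l.set n (l[n+1]'h)).set (n+1) (l[n]'(by omega))).Perm l := by
  intro l
  induction l with
  | nil => intro n h; simp at h
  | cons x t ih =>
    intro n h
    match n with
    | 0 =>
      match t, h with
      | y :: t', _ =>
        simp only [List.getElem_cons_succ, List.getElem_cons_zero, List.set]
        exact List.Perm.swap x y t'
    | n + 1 =>
      simp only [List.getElem_cons_succ, List.set]
      exact List.Perm.cons x (ih n (by simpa using h))

lemma wSw_perm {α : List ℕ} (i : ℕ) (hsp : Sp α i) : (wSw α i).Perm α := by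
  obtain ⟨hi1, hil, hgap, hmono⟩ := hsp
  have h1 : i - 1 + 1 < α.length := by omega
  have hv1 : Ath α i + 1 = α[(i-1)+1]'h1 := by
    rw [Ath_getElem α h1, (by omega : i - 1 + 1 = i)]
    omega
  have hv2 : Ath α i = α[i-1]'(by omega) := by
    rw [Ath_getElem α (by omega : i - 1 < α.length)]
    rw [(by omega : i - 1 + 1 = i)]
  have : wSw α i = (α.set (i-1) (α[(i-1)+1]'h1)).set ((i-1)+1) (α[i-1]'(by omega)) := by
    unfold wSw
    rw [← hv1, ← hv2, (by omega : i - 1 + 1 = i)]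
  rw [this]
  exact perm_set_swap α (i-1) h1

lemma wSw_getElem {α : List ℕ} (i : ℕ) (hsp : Sp α i) {t : ℕ} (ht : t < α.length) :
    (wSw α i)[t]'(by unfold wSw; simpa using ht) =
      if t = i - 1 then Ath α i + 1 else if t = i then Ath α i else Ath α (t+1) := by
  obtain ⟨hi1, hil, hgap, hmono⟩ := hsp
  unfold wSw
  rw [List.getElem_set, List.getElem_set]
  by_cases h1 : t = i
  · rw [if_pos h1.symm, if_neg (show ¬ t = i - 1 by omega), if_pos h1]
  · rw [if_neg (fun hh : i = t => h1 hh.symm)]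
    by_cases h2 : t = i - 1
    · rw [if_pos h2.symm, if_pos h2]
    · rw [if_neg (fun hh : i - 1 = t => h2 hh.symm), if_neg h2, if_neg h1, Ath_getElem α ht]

lemma wSw_sorted {α : List ℕ} (i : ℕ) (hsp : Sp α i) : List.Pairwise (· ≥ ·) (wSw α i) := by
  have hsp' := hsp
  obtain ⟨hi1, hil, hgap, hmono⟩ := hsp'
  rw [List.pairwise_iff_getElem]
  intro a b ha hb hab
  have hal : a < α.length := by
    have : (wSw α i).length = α.length := by unfold wSw; simp
    omega
  have hbl : b < α.length := by
    have : (wSw α i).length = α.length := by unfold wSw; simp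
    omega
  rw [wSw_getElem i hsp hal, wSw_getElem i hsp hbl]
  have hsuffle : ∀ t, i < t → t < α.length → Ath α (t+1) ≤ Ath α i := by
    intro t h1' h2'
    exact hmono i (t+1) hi1 (by omega) (by omega) (by omega)
  by_cases ha1 : a = i - 1
  · rw [if_pos ha1]
    have hbi : b ≠ i - 1 := by omega
    rw [if_neg hbi]
    by_cases hb2 : b = i
    · rw [if_pos hb2]; omega
    · rw [if_neg hb2]
      have hbge : i < b := by omega
      have := hsuffle b hbge hbl
      omega
  · rw [if_neg ha1]
    by_cases ha2 : a = i
    · rw [if_pos ha2]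
      rw [if_neg (by omega), if_neg (by omega)]
      have := hsuffle b (by omega) hbl
      omega
    · rw [if_neg ha2]
      by_cases hb1 : b = i - 1
      · rw [if_pos hb1]
        have h3 : Ath α (i+1) ≤ Ath α (a+1) := by
          apply hmono (a+1) (i+1) (by omega) (by omega) (by omega)
          rintro ⟨h5, -⟩
          omega
        omega
      · rw [if_neg hb1]
        by_cases hb2 : b = i
        · rw [if_pos hb2]
          exact hmono (a+1) i (by omega) (by omega) (by omega) (by omega)
        · rw [if_neg hb2]
          apply hmono (a+1) (b+1) (by omega) (by omega) (by omega)
          rintro ⟨h5, -⟩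
          omega

end PermSorted

end Proof14

/-- for a strong composition `α`, `κ_α = 𝔉_α + 𝔉_β` with `β ≠ α` iff
`α` has exactly one inversion, an adjacent pair `(i, i+1)` with `αᵢ₊₁ = αᵢ + 1`;
in that case `β = sort(α)`, the weakly decreasing rearrangement of `α`. -/
theorem stmt14 (α : List ℕ) (hpos : ∀ x ∈ α, 0 < x) :
    ((∃ β : List ℕ, β ≠ α ∧
        ∀ b : List ℕ, keyCoeff α b = fundCoeff α b + fundCoeff β b) ↔
      ((invSet α).card = 1 ∧ ∀ p ∈ invSet α,
        (p.2 : ℕ) = (p.1 : ℕ) + 1 ∧ α.get p.2 = α.get p.1 + 1)) ∧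
    (∀ β : List ℕ, β ≠ α →
      (∀ b : List ℕ, keyCoeff α b = fundCoeff α b + fundCoeff β b) →
      β.Perm α ∧ List.Pairwise (· ≥ ·) β) := by
  constructor
  · constructor
    · rintro ⟨β, hβ, hid⟩
      obtain ⟨i, hsp, -⟩ := master hpos hβ hid
      exact sp_invSet i hsp
    · rintro ⟨hcard, hprop⟩
      obtain ⟨i, hsp⟩ := invSet_sp hcard hprop
      refine ⟨wSw α i, wSw_ne hsp.1 hsp.2.1, ?_⟩
      intro b
      rw [keyCoeff_sp hsp b, fundCoeff_strong hpos b, fundCoeff_strong (wSw_pos hpos i hsp) b]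
  · intro β hβ hid
    obtain ⟨i, hsp, rfl⟩ := master hpos hβ hid
    exact ⟨wSw_perm i hsp, wSw_sorted i hsp⟩
end

section
/- For any strong composition α, both 𝔉_α and 𝔉_{sort(α)} occur as terms in the fundamental slide expansion of κ_α; equivalently, there exist quasi-Yamanouchi Kohnert tableaux of content α with weights α and sort(α) respectively. Specifically, bottom-justifying each column of the basic tableau with entries increasing bottom to top gives a quasi-Yamanouchi Kohnert tableau of weight sort(α). -/
/-- column list for the bottom-justified filling: indices with part ≥ c -/
def colL (α : List ℕ) (c : ℕ) : List ℕ :=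
  (List.range α.length).filter (fun i => decide (c ≤ α.getD i 0))

/-- the bottom-justified filling -/
def botT (α : List ℕ) : ℕ × ℕ → ℕ := fun p =>
  if 1 ≤ p.1 ∧ 1 ≤ p.2 then ((colL α p.2).map (· + 1)).getD (p.1 - 1) 0 else 0

lemma colL_pairwise (α : List ℕ) (c : ℕ) : (colL α c).Pairwise (· < ·) :=
  List.pairwise_lt_range.filter _

lemma mem_colL {α : List ℕ} {c i : ℕ} : i ∈ colL α c ↔ i < α.length ∧ c ≤ α.getD i 0 := by
  simp [colL]

lemma le_getElem_of_pairwise : ∀ (l : List ℕ), l.Pairwise (· < ·) →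
    ∀ (m : ℕ), (∀ x ∈ l, m ≤ x) → ∀ (k : ℕ) (h : k < l.length), m + k ≤ l[k] := by
  intro l
  induction l with
  | nil => intro _ m _ k h; simp at h
  | cons a t ih =>
    intro hp m hm k h
    match k with
    | 0 => simpa using hm a (by simp)
    | k + 1 =>
      have ht := hp.of_cons
      have ha : ∀ x ∈ t, a + 1 ≤ x := fun x hx => (List.pairwise_cons.mp hp).1 x hx
      have := ih ht (a + 1) ha k (by simpa using h)
      have hma : m ≤ a := hm a (by simp)
      simpa using le_trans (by omega) this

lemma getElem_lt_getElem {l : List ℕ} (hp : l.Pairwise (· < ·)) {i j : ℕ}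
    (hi : i < l.length) (hj : j < l.length) (hij : i < j) : l[i] < l[j] :=
  List.pairwise_iff_getElem.mp hp i j hi hj hij

lemma getElem_inj_of_pairwise {l : List ℕ} (hp : l.Pairwise (· < ·)) {i j : ℕ}
    (hi : i < l.length) (hj : j < l.length) (hij : l[i] = l[j]) : i = j := by
  rcases lt_trichotomy i j with h | h | h
  · exact absurd hij (ne_of_lt (getElem_lt_getElem hp hi hj h))
  · exact h
  · exact absurd hij.symm (ne_of_lt (getElem_lt_getElem hp hj hi h))

/-- location of `m` in a filtered range -/
lemma filter_range_idx (p : ℕ → Bool) {n m : ℕ} (hm : m < n) (hp : p m = true) :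
    ∃ h : ((List.range m).filter p).length < ((List.range n).filter p).length,
      ((List.range n).filter p)[((List.range m).filter p).length] = m := by
  have hn : n = (m + 1) + (n - (m + 1)) := by omega
  have hsplit : List.range n = (List.range m ++ [m]) ++
      List.map (fun x => (m + 1) + x) (List.range (n - (m + 1))) := by
    conv_lhs => rw [hn]
    rw [List.range_add, List.range_succ]
  have hfil : (List.range n).filter p = (List.range m).filter p ++
      (m :: (List.map (fun x => (m + 1) + x) (List.range (n - (m + 1)))).filter p) := by
    rw [hsplit, List.filter_append, List.filter_append, List.append_assoc]
    congr 1
    simp [List.filter_cons, hp]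
  rw [hfil]
  refine ⟨by simp, ?_⟩
  rw [List.getElem_append_right (le_refl _)]
  simp

lemma botT_ne_zero_iff {α : List ℕ} {r c : ℕ} :
    botT α (r, c) ≠ 0 ↔ 1 ≤ r ∧ 1 ≤ c ∧ r - 1 < (colL α c).length := by
  unfold botT
  by_cases h : 1 ≤ r ∧ 1 ≤ c
  · simp only [h, if_pos, and_true]
    by_cases h2 : r - 1 < (colL α c).length
    · rw [List.getD_eq_getElem _ _ (by simpa using h2)]
      simp [h, h2]
    · rw [List.getD_eq_default _ _ (by simpa using not_lt.mp h2)]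
      simp [h, h2]
  · simp only [h, if_neg, not_false_iff]
    simp only [ne_eq, not_true_eq_false, false_iff]
    tauto

lemma botT_eq {α : List ℕ} {r c : ℕ} (hr : 1 ≤ r) (hc : 1 ≤ c)
    (h : r - 1 < (colL α c).length) : botT α (r, c) = (colL α c)[r - 1] + 1 := by
  unfold botT
  rw [if_pos ⟨hr, hc⟩, List.getD_eq_getElem _ _ (by simpa using h)]
  simp

lemma colL_length (α : List ℕ) (c : ℕ) :
    (colL α c).length = α.countP (fun x => decide (c ≤ x)) := by
  have hmap : (List.range α.length).map (fun i => α.getD i 0) = α := by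
    apply List.ext_getElem
    · simp
    · intro i h1 h2
      simp only [List.getElem_map, List.getElem_range]
      exact List.getD_eq_getElem α 0 h2
  conv_rhs => rw [← hmap]
  rw [List.countP_map, colL, ← List.countP_eq_length_filter]
  rfl

lemma sorted_countP {s : List ℕ} (hs : List.Pairwise (· ≥ ·) s) {r : ℕ} (hr : r < s.length)
    (c : ℕ) : r + 1 ≤ s.countP (fun x => decide (c ≤ x)) ↔ c ≤ s[r] := by
  constructor
  · intro h
    by_contra hc
    push_neg at hc
    have : s.countP (fun x => decide (c ≤ x)) ≤ r := by
      conv_lhs => rw [← List.take_append_drop r s]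
      rw [List.countP_append]
      have h1 : (s.take r).countP (fun x => decide (c ≤ x)) ≤ r := by
        calc (s.take r).countP (fun x => decide (c ≤ x)) ≤ (s.take r).length :=
          List.countP_le_length
        _ ≤ r := by simp
      have h2 : (s.drop r).countP (fun x => decide (c ≤ x)) = 0 := by
        rw [List.countP_eq_zero]
        intro x hx
        rcases List.mem_iff_getElem.mp hx with ⟨j, hj, rfl⟩
        rw [List.getElem_drop]
        simp only [decide_eq_true_eq, not_le]
        have hrj : r + j < s.length := by
          have := hj; simp only [List.length_drop] at this; omega
        have : s[r] ≥ s[r + j] := by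
          rcases Nat.eq_zero_or_pos j with hj0 | hj0
          · subst hj0; simp
          · exact List.pairwise_iff_getElem.mp hs r (r+j) hr hrj (by omega)
        omega
      omega
    omega
  · intro h
    have : (s.take (r+1)).countP (fun x => decide (c ≤ x)) = r + 1 := by
      have hlen : (s.take (r+1)).length = r + 1 := by simp; omega
      have hall : (s.take (r+1)).countP (fun x => decide (c ≤ x)) = (s.take (r+1)).length := by
        rw [List.countP_eq_length]
        intro x hx
        rcases List.mem_iff_getElem.mp hx with ⟨j, hj, rfl⟩
        rw [List.getElem_take]
        simp only [decide_eq_true_eq]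
        have hjr : j ≤ r := by rw [hlen] at hj; omega
        rcases eq_or_lt_of_le hjr with hjr' | hjr'
        · subst hjr'; exact h
        · exact le_trans h (List.pairwise_iff_getElem.mp hs j r (by omega) hr hjr')
      rw [hall, hlen]
    calc r + 1 = (s.take (r+1)).countP (fun x => decide (c ≤ x)) := this.symm
    _ ≤ s.countP (fun x => decide (c ≤ x)) := (List.take_sublist _ _).countP_le
lemma basic_eq {a : List ℕ} {r c : ℕ}
    (hc : 1 ≤ r ∧ r ≤ a.length ∧ 1 ≤ c ∧ c ≤ a.getD (r - 1) 0) :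
    basicFilling a (r, c) = r := by
  unfold basicFilling
  rw [if_pos]
  exact hc

lemma basic_eq_zero {a : List ℕ} {r c : ℕ}
    (hc : ¬(1 ≤ r ∧ r ≤ a.length ∧ 1 ≤ c ∧ c ≤ a.getD (r - 1) 0)) :
    basicFilling a (r, c) = 0 := by
  unfold basicFilling
  rw [if_neg]
  exact hc

lemma basic_val {a : List ℕ} {r c : ℕ} (h : basicFilling a (r, c) ≠ 0) :
    basicFilling a (r, c) = r ∧ 1 ≤ r ∧ r ≤ a.length ∧ 1 ≤ c ∧ c ≤ a.getD (r - 1) 0 := by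
  by_cases hc : 1 ≤ r ∧ r ≤ a.length ∧ 1 ≤ c ∧ c ≤ a.getD (r - 1) 0
  · exact ⟨basic_eq hc, hc.1, hc.2.1, hc.2.2.1, hc.2.2.2⟩
  · exact absurd (basic_eq_zero hc) h

lemma botT_val {α : List ℕ} {r c : ℕ} (h : botT α (r, c) ≠ 0) :
    ∃ hlt : r - 1 < (colL α c).length,
      botT α (r, c) = (colL α c)[r - 1] + 1 ∧ 1 ≤ r ∧ 1 ≤ c := by
  obtain ⟨hr, hc, hlt⟩ := botT_ne_zero_iff.mp h
  exact ⟨hlt, botT_eq hr hc hlt, hr, hc⟩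

/-- uniqueness of the index of an element in a column -/
lemma colL_idx_unique {α : List ℕ} {c k : ℕ} (hk : k < (colL α c).length) :
    k = ((List.range ((colL α c)[k])).filter (fun i => decide (c ≤ α.getD i 0))).length := by
  have hmem : (colL α c)[k] ∈ colL α c := List.getElem_mem _
  obtain ⟨hm, hp⟩ := mem_colL.mp hmem
  obtain ⟨hlt, hval⟩ := filter_range_idx (fun i => decide (c ≤ α.getD i 0)) hm
      (decide_eq_true hp)
  exact getElem_inj_of_pairwise (colL_pairwise α c) hk hlt hval.symm

theorem stmt15' (α : List ℕ) (hpos : ∀ x ∈ α, 0 < x) :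
    (∃ T : ℕ × ℕ → ℕ, IsQYKohnert α T ∧ wtList α T = α) ∧
    (∀ s : List ℕ, s.Perm α → List.Pairwise (· ≥ ·) s →
      ∃ T : ℕ × ℕ → ℕ, IsQYKohnert α T ∧ wtList α T = s) := by
  constructor
  · -- Part 1: the basic filling
    refine ⟨basicFilling α, ⟨⟨?_, ?_, ?_, ?_, ?_, ?_⟩, ?_⟩, ?_⟩
    · intro r c h
      obtain ⟨_, h1, _, h3, _⟩ := basic_val h
      exact ⟨h1, h3⟩
    · intro r c h
      obtain ⟨he, h1, h2, _, _⟩ := basic_val h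
      rw [he]; exact ⟨h1, h2⟩
    · intro i h1 h2 c hc
      constructor
      · intro hca
        refine ⟨i, basic_eq ⟨h1, h2, hc, hca⟩, ?_⟩
        intro r hr
        have hne : basicFilling α (r, c) ≠ 0 := by rw [hr]; omega
        obtain ⟨he, _⟩ := basic_val hne
        omega
      · intro hgt r hri
        have hne : basicFilling α (r, c) ≠ 0 := by rw [hri]; omega
        obtain ⟨he, _, _, _, h5⟩ := basic_val hne
        have hri' : r = i := by omega
        rw [hri'] at h5
        omega
    · intro r c h
      exact (basic_val h).1.symm.le
    · intro r c r' c' h heq hcc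
      have hne' : basicFilling α (r', c') ≠ 0 := by rw [← heq]; exact h
      obtain ⟨he, _⟩ := basic_val h
      obtain ⟨he', _⟩ := basic_val hne'
      omega
    · intro r r' c h h' hlt hrr
      obtain ⟨he, _⟩ := basic_val h
      obtain ⟨he', _⟩ := basic_val h'
      omega
    · intro r hr ⟨c, hc⟩
      obtain ⟨_, h1, h2, h3, h4⟩ := basic_val hc
      exact Or.inl ⟨1, basic_eq ⟨h1, h2, le_refl 1, by omega⟩⟩
    · -- weight of basic filling is α
      apply List.ext_getElem
      · simp [wtList]
      · intro i h1 h2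
        have h1' : i < α.length := by simpa [wtList] using h1
        simp only [wtList, List.getElem_map, List.getElem_range]
        have hle : α[i] ≤ α.sum :=
          List.single_le_sum (fun x _ => Nat.zero_le x) _ (List.getElem_mem h1')
        have hset : ((Finset.Icc 1 α.sum).filter fun c => basicFilling α (i + 1, c) ≠ 0)
            = Finset.Icc 1 α[i] := by
          ext c
          simp only [Finset.mem_filter, Finset.mem_Icc]
          constructor
          · intro ⟨_, hc⟩
            obtain ⟨_, _, _, h4, h5⟩ := basic_val hc
            rw [show i + 1 - 1 = i from rfl, List.getD_eq_getElem α 0 h1'] at h5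
            exact ⟨h4, h5⟩
          · intro ⟨hc1, hc2⟩
            refine ⟨⟨hc1, le_trans hc2 hle⟩, ?_⟩
            have : basicFilling α (i + 1, c) = i + 1 := basic_eq
              ⟨by omega, by omega, hc1, by
                rw [show i + 1 - 1 = i from rfl, List.getD_eq_getElem α 0 h1']; exact hc2⟩
            omega
        rw [hset, Nat.card_Icc]
        omega
  · -- Part 2: the bottom-justified filling
    intro s hperm hsort
    have hlen : s.length = α.length := hperm.length_eq
    refine ⟨botT α, ⟨⟨?_, ?_, ?_, ?_, ?_, ?_⟩, ?_⟩, ?_⟩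
    · intro r c h
      obtain ⟨_, _, hr, hc⟩ := botT_val h
      exact ⟨hr, hc⟩
    · intro r c h
      obtain ⟨hlt, he, hr, hc⟩ := botT_val h
      have hmem := mem_colL.mp (List.getElem_mem hlt)
      rw [he]; omega
    · intro i h1 h2 c hc
      constructor
      · intro hca
        obtain ⟨hlt, hval⟩ := filter_range_idx (fun j => decide (c ≤ α.getD j 0))
          (show i - 1 < α.length by omega) (decide_eq_true hca)
        set k := ((List.range (i - 1)).filter (fun j => decide (c ≤ α.getD j 0))).length with hk
        have hltc : k < (colL α c).length := hlt
        have hvalc : (colL α c)[k] = i - 1 := hval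
        have hbe : botT α (k + 1, c) = (colL α c)[k + 1 - 1]'(by simpa using hltc) + 1 :=
          botT_eq (by omega) hc (by simpa using hltc)
        refine ⟨k + 1, ?_, ?_⟩
        · show botT α (k + 1, c) = i
          rw [hbe]
          simp only [Nat.add_sub_cancel]
          rw [hvalc]; omega
        · intro r hr
          have hne : botT α (r, c) ≠ 0 := by rw [hr]; omega
          obtain ⟨hlt', he', hr', _⟩ := botT_val hne
          have : (colL α c)[r - 1] = i - 1 := by omega
          have := getElem_inj_of_pairwise (colL_pairwise α c) hlt' hltc
            (by rw [this, hvalc])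
          omega
      · intro hgt r hri
        have hne : botT α (r, c) ≠ 0 := by rw [hri]; omega
        obtain ⟨hlt', he', _, _⟩ := botT_val hne
        have hv : (colL α c)[r - 1] = i - 1 := by omega
        have hmem := mem_colL.mp (List.getElem_mem hlt')
        rw [hv] at hmem
        omega
    · intro r c h
      obtain ⟨hlt, he, hr, hc⟩ := botT_val h
      have := le_getElem_of_pairwise (colL α c) (colL_pairwise α c) 0
        (fun x _ => Nat.zero_le x) (r - 1) hlt
      omega
    · intro r c r' c' h heq hcc
      have hne' : botT α (r', c') ≠ 0 := by rw [← heq]; exact h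
      obtain ⟨hlt, he, hr, hc⟩ := botT_val h
      obtain ⟨hlt', he', hr', hc'⟩ := botT_val hne'
      have hval : (colL α c)[r - 1] = (colL α c')[r' - 1] := by omega
      have hidx := colL_idx_unique (α := α) (c := c) hlt
      have hidx' := colL_idx_unique (α := α) (c := c') hlt'
      rw [hval] at hidx
      have hsub : ((List.range ((colL α c')[r' - 1])).filter
            (fun i => decide (c' ≤ α.getD i 0))).Sublist
          ((List.range ((colL α c')[r' - 1])).filter (fun i => decide (c ≤ α.getD i 0))) := by
        apply List.monotone_filter_right
        intro a ha
        simp only [decide_eq_true_eq] at ha ⊢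
        omega
      have := hsub.length_le
      omega
    · intro r r' c h h' hlt hrr
      obtain ⟨hl, he, hr1, _⟩ := botT_val h
      obtain ⟨hl', he', hr1', _⟩ := botT_val h'
      have : (colL α c)[r' - 1] < (colL α c)[r - 1] :=
        getElem_lt_getElem (colL_pairwise α c) hl' hl (by omega)
      omega
    · -- QY condition
      intro r hr ⟨c, hc⟩
      obtain ⟨hlt, he, hr1, hc1⟩ := botT_val hc
      have hmem := mem_colL.mp (List.getElem_mem hlt)
      have hval := le_getElem_of_pairwise (colL α c) (colL_pairwise α c) 0
        (fun x _ => Nat.zero_le x) (r - 1) hlt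
      have hrl : r - 1 < α.length := by omega
      left
      refine ⟨1, ?_⟩
      have hcol1 : colL α 1 = List.range α.length := by
        apply List.filter_eq_self.mpr
        intro a ha
        simp only [decide_eq_true_eq]
        have hal : a < α.length := List.mem_range.mp ha
        have := hpos α[a] (List.getElem_mem hal)
        rw [List.getD_eq_getElem α 0 hal]
        omega
      have hbe : botT α (r, 1) = (colL α 1)[r - 1]'(by rw [hcol1]; simpa using hrl) + 1 :=
        botT_eq hr (le_refl 1) (by rw [hcol1]; simpa using hrl)
      have hge : (colL α 1)[r - 1]'(by rw [hcol1]; simpa using hrl) = r - 1 := by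
        simp [hcol1]
      omega
    · -- weight is s
      apply List.ext_getElem
      · simp [wtList, hlen]
      · intro i h1 h2
        have h1' : i < α.length := by simpa [wtList] using h1
        have h1s : i < s.length := by omega
        simp only [wtList, List.getElem_map, List.getElem_range]
        have hsi : s[i] ≤ α.sum := by
          have hm : s[i] ∈ α := hperm.mem_iff.mp (List.getElem_mem h1s)
          exact List.single_le_sum (fun x _ => Nat.zero_le x) _ hm
        have hset : ((Finset.Icc 1 α.sum).filter fun c => botT α (i + 1, c) ≠ 0)
            = Finset.Icc 1 s[i] := by
          ext c
          simp only [Finset.mem_filter, Finset.mem_Icc]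
          have hiff : botT α (i + 1, c) ≠ 0 ↔ 1 ≤ c ∧ i < (colL α c).length := by
            rw [botT_ne_zero_iff]
            constructor
            · intro ⟨_, h2, h3⟩; exact ⟨h2, by simpa using h3⟩
            · intro ⟨h2, h3⟩; exact ⟨by omega, h2, by simpa using h3⟩
          have hcount : (colL α c).length = s.countP (fun x => decide (c ≤ x)) := by
            rw [colL_length, hperm.countP_eq]
          rw [hiff, hcount]
          have hcs := sorted_countP hsort h1s c
          constructor
          · intro ⟨⟨hc1, _⟩, _, hc3⟩
            exact ⟨hc1, hcs.mp (by omega)⟩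
          · intro ⟨hc1, hc2⟩
            have := hcs.mpr hc2
            exact ⟨⟨hc1, le_trans hc2 hsi⟩, hc1, by omega⟩
        rw [hset, Nat.card_Icc]
        omega

/-- for any strong composition `α` there are quasi-Yamanouchi Kohnert
tableaux of content `α` of weight `α` and of weight `sort(α)`, so both `𝔉_α` and
`𝔉_{sort(α)}` occur in the fundamental slide expansion of `κ_α`. -/
theorem stmt15 (α : List ℕ) (hpos : ∀ x ∈ α, 0 < x) :
    (∃ T : ℕ × ℕ → ℕ, IsQYKohnert α T ∧ wtList α T = α) ∧
    (∀ s : List ℕ, s.Perm α → List.Pairwise (· ≥ ·) s →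
      ∃ T : ℕ × ℕ → ℕ, IsQYKohnert α T ∧ wtList α T = s) := stmt15' α hpos
end
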